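/- arXiv:2205.03188 — 7 statements merged into one kernel-verified Lean document; each statement's English description precedes it below -/
import Mathlib

section
/- Let [σ] be a cyclic permutation of length m and [π] a cyclic permutation of length n, on disjoint sets of letters. Then the number of cyclic shuffles of [σ] and [π] is (m+n−1)·C(m+n−2, m−1). -/
open Polynomial

/-- The descent set of a list (1-based positions `i` with `l_i > l_{i+1}`). -/
def desSet (l : List ℕ) : Finset ℕ :=
  (Finset.Icc 1 (l.length - 1)).filter (fun i => l.getD i 0 < l.getD (i - 1) 0)

/-- The number of descents of a list. -/
def des (l : List ℕ) : ℕ := (desSet l).card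

/-- The major index of a list: sum of descent positions. -/
def maj (l : List ℕ) : ℕ := ∑ i ∈ desSet l, i

/-- The cyclic descent set: 1-based positions `i ∈ {1,…,n}` with `l_i > l_{i+1}`,
where `l_{n+1} = l_1`. -/
def cdesSet (l : List ℕ) : Finset ℕ :=
  (Finset.Icc 1 l.length).filter (fun i => l.getD (i % l.length) 0 < l.getD (i - 1) 0)

/-- The cyclic descent number. -/
def cdes (l : List ℕ) : ℕ := (cdesSet l).card

/-- The cyclic descent-bottom set: values `l_{i+1}` at cyclic descent positions `i`. -/
def cBd (l : List ℕ) : Finset ℕ := (cdesSet l).image (fun i => l.getD (i % l.length) 0)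

/-- `α` is a (linear) shuffle of `σ` and `π`. -/
def IsShuffle (σ π α : List ℕ) : Prop :=
  α.Nodup ∧ σ.Sublist α ∧ π.Sublist α ∧ α.length = σ.length + π.length

/-- `σ` is a circular subsequence of `α`: some rotation of `σ` is a subsequence of
some rotation of `α`. -/
def IsCyclicSubseq (σ α : List ℕ) : Prop := ∃ i j, (σ.rotate i).Sublist (α.rotate j)

/-- `α` is a cyclic shuffle of `σ` and `π` (as cyclic permutations). -/
def IsCyclicShuffle (σ π α : List ℕ) : Prop :=
  α.Nodup ∧ α.length = σ.length + π.length ∧ IsCyclicSubseq σ α ∧ IsCyclicSubseq π α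

/-- `l` is the canonical representative of its cyclic class: it starts with its
largest letter. -/
def IsRep (l : List ℕ) : Prop := l ≠ [] ∧ ∀ x ∈ l, x ≤ l.headI

/-- The rotation of `l` starting with the letter `i` (the map `S_i`). -/
def startAt (l : List ℕ) (i : ℕ) : List ℕ := l.rotate (l.idxOf i)

/-- The Gaussian binomial coefficient as a polynomial in `q = X`. -/
noncomputable def qbinom : ℕ → ℕ → Polynomial ℤ
  | _, 0 => 1
  | 0, _ + 1 => 0
  | n + 1, k + 1 => qbinom n k + X ^ (k + 1) * qbinom n (k + 1)
termination_by n k => n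

/-- The Gaussian binomial with integer lower index, `0` for negative lower index. -/
noncomputable def qbinomZ (a : ℕ) (b : ℤ) : Polynomial ℤ := if 0 ≤ b then qbinom a b.toNat else 0

/-- The binomial coefficient with integer lower index, `0` for negative lower index. -/
def chooseZ (a : ℕ) (b : ℤ) : ℕ := if 0 ≤ b then a.choose b.toNat else 0


def shuffles : List ℕ → List ℕ → Finset (List ℕ)
  | [], y => {y}
  | x, [] => {x}
  | a :: x, b :: y =>
      ((shuffles x (b :: y)).image (a :: ·)) ∪ ((shuffles (a :: x) y).image (b :: ·))
termination_by x y => x.length + y.length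

lemma shuffles_nil_left (y : List ℕ) : shuffles [] y = {y} := by
  rw [shuffles.eq_def]

lemma shuffles_nil_right (x : List ℕ) : shuffles x [] = {x} := by
  rw [shuffles.eq_def]; cases x <;> rfl

lemma mem_shuffles_of {x y α : List ℕ} (h : α ∈ shuffles x y) :
    x.Sublist α ∧ y.Sublist α ∧ α.Perm (x ++ y) := by
  induction x, y using shuffles.induct generalizing α with
  | case1 y =>
      simp only [shuffles_nil_left, Finset.mem_singleton] at h
      subst h
      exact ⟨List.nil_sublist _, List.Sublist.refl _, by simp⟩
  | case2 x h0 =>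
      simp only [shuffles_nil_right, Finset.mem_singleton] at h
      subst h
      exact ⟨List.Sublist.refl _, List.nil_sublist _, by simp⟩
  | case3 a x b y ih1 ih2 =>
      simp only [shuffles, Finset.mem_union, Finset.mem_image] at h
      rcases h with ⟨β, hβ, rfl⟩ | ⟨β, hβ, rfl⟩
      · obtain ⟨h1, h2, h3⟩ := ih1 hβ
        exact ⟨List.cons_sublist_cons.2 h1, h2.trans (List.sublist_cons_self _ _),
          (h3.cons a)⟩
      · obtain ⟨h1, h2, h3⟩ := ih2 hβ
        refine ⟨h1.trans (List.sublist_cons_self _ _), List.cons_sublist_cons.2 h2, ?_⟩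
        exact (h3.cons b).trans (List.perm_middle).symm

lemma mem_shuffles_iff {x y α : List ℕ} (hx : x.Nodup) (hy : y.Nodup) (hd : x.Disjoint y) :
    α ∈ shuffles x y ↔ x.Sublist α ∧ y.Sublist α ∧ α.Perm (x ++ y) := by
  constructor
  · exact mem_shuffles_of
  · rintro ⟨h1, h2, h3⟩
    induction α generalizing x y with
    | nil =>
        have : x = [] := List.eq_nil_of_sublist_nil h1
        have : y = [] := List.eq_nil_of_sublist_nil h2
        subst_vars; simp [shuffles_nil_left]
    | cons h t ih =>
        have hxy : (x ++ y).Nodup := List.Nodup.append hx hy hd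
        have hα : (h :: t).Nodup := h3.symm.nodup hxy
        have hht : h ∉ t := (List.nodup_cons.1 hα).1
        have hmem : h ∈ x ++ y := h3.mem_iff.1 (List.mem_cons_self (a := h) (l := t))
        rcases List.mem_append.1 hmem with hmx | hmy
        · rcases List.sublist_cons_iff.1 h1 with h1' | ⟨r, rfl, hr⟩
          · exact absurd (h1'.mem hmx) hht
          · have hy' : y.Sublist t := by
              rcases List.sublist_cons_iff.1 h2 with h2' | ⟨r', hr2, _⟩
              · exact h2'
              · exact (hd hmx (hr2 ▸ List.mem_cons_self (a := h) (l := r'))).elim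
            have ht : t.Perm (r ++ y) := (h3.cons_inv)
            have hr' : r.Nodup := (List.nodup_cons.1 hx).2
            have hdr : r.Disjoint y := fun a ha => hd (List.mem_cons_of_mem _ ha)
            have := ih hr' hy hdr hr hy' ht
            cases y with
            | nil => simp_all [shuffles_nil_right]
            | cons b y' =>
                simp only [shuffles, Finset.mem_union, Finset.mem_image]
                exact Or.inl ⟨t, this, rfl⟩
        · have hmx' : h ∉ x := fun hc => hd hc hmy
          rcases List.sublist_cons_iff.1 h2 with h2' | ⟨r, rfl, hr⟩
          · exact absurd (h2'.mem hmy) hht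
          · have hx' : x.Sublist t := by
              rcases List.sublist_cons_iff.1 h1 with h1' | ⟨r', hr1, _⟩
              · exact h1'
              · exact (hmx' (hr1 ▸ List.mem_cons_self (a := h) (l := r'))).elim
            have ht : t.Perm (x ++ r) := by
              have : (h :: t).Perm (h :: (x ++ r)) := h3.trans List.perm_middle
              exact this.cons_inv
            have hr' : r.Nodup := (List.nodup_cons.1 hy).2
            have hdr : x.Disjoint r := fun a ha hb => hd ha (List.mem_cons_of_mem _ hb)
            have := ih hx hr' hdr hx' hr ht
            cases x with
            | nil => simp_all [shuffles_nil_left]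
            | cons a x' =>
                simp only [shuffles, Finset.mem_union, Finset.mem_image]
                exact Or.inr ⟨t, this, rfl⟩

lemma card_shuffles {x y : List ℕ} (hd : x.Disjoint y) :
    (shuffles x y).card = (x.length + y.length).choose x.length := by
  induction x, y using shuffles.induct with
  | case1 y => simp [shuffles_nil_left]
  | case2 x h0 => simp [shuffles_nil_right]
  | case3 a x b y ih1 ih2 =>
      have hab : a ≠ b := fun h => hd (List.mem_cons_self (a := a) (l := x)) (h ▸ List.mem_cons_self (a := b) (l := y))
      have hdisj : Disjoint ((shuffles x (b :: y)).image (a :: ·))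
          ((shuffles (a :: x) y).image (b :: ·)) := by
        simp only [Finset.disjoint_left, Finset.mem_image]
        rintro α ⟨β, _, rfl⟩ ⟨γ, _, hc⟩
        exact hab (List.cons.injEq .. ▸ hc.symm).1
      have hinj : ∀ c : ℕ, Set.InjOn (c :: ·) (Set.univ) := by
        intro c p _ q _ h; simpa using h
      rw [shuffles, Finset.card_union_of_disjoint hdisj,
        Finset.card_image_of_injective _ (fun p q h => by simpa using h),
        Finset.card_image_of_injective _ (fun p q h => by simpa using h),
        ih1 (fun u hu hv => hd (List.mem_cons_of_mem _ hu) hv),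
        ih2 (fun u hu hv => hd hu (List.mem_cons_of_mem _ hv))]
      simp only [List.length_cons]
      rw [show x.length + 1 + (y.length + 1) = (x.length + (y.length+1)) + 1 by ring]
      rw [Nat.choose_succ_succ]
      congr 2
      ring


-- filter of a rotation is a rotation of the filter
lemma filter_rotate (l : List ℕ) (p : ℕ → Bool) (i : ℕ) :
    ∃ j, (l.rotate i).filter p = (l.filter p).rotate j := by
  rcases eq_or_ne l [] with rfl | hl
  · exact ⟨0, by simp⟩
  · have hlen : 0 < l.length := List.length_pos_iff.2 hl
    have hi : i % l.length ≤ l.length := (Nat.mod_lt _ hlen).le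
    refine ⟨((l.take (i % l.length)).filter p).length, ?_⟩
    have key : l.filter p = (l.take (i % l.length)).filter p ++ (l.drop (i % l.length)).filter p := by
      conv_lhs => rw [← List.take_append_drop (i % l.length) l]
      rw [List.filter_append]
    rw [← List.rotate_mod, List.rotate_eq_drop_append_take hi, List.filter_append,
      key, List.rotate_append_length_eq]

lemma headI_eq_get' (l : List ℕ) (h : 0 < l.length) : l.headI = l.get ⟨0, h⟩ := by
  cases l with
  | nil => simp at h
  | cons a t => rfl

-- headI of rotate
lemma headI_rotate {l : List ℕ} {k : ℕ} (hk : k < l.length) :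
    (l.rotate k).headI = l.get ⟨k, hk⟩ := by
  have hne : l ≠ [] := by intro h; simp [h] at hk
  have hlen : (l.rotate k).length = l.length := List.length_rotate l k
  have h0 : 0 < (l.rotate k).length := by omega
  rw [headI_eq_get' _ h0, List.get_rotate]
  congr 1
  simp [Nat.mod_eq_of_lt hk]

-- unique rotation with given head
lemma eq_of_isRotated_headI {l₁ l₂ : List ℕ} (h : l₁ ~r l₂) (hn : l₂.Nodup)
    (h1 : l₂ ≠ []) (hh : l₁.headI = l₂.headI) : l₁ = l₂ := by
  obtain ⟨t, ht⟩ := h.symm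
  have hlen : 0 < l₂.length := List.length_pos_iff.2 h1
  have hk : t % l₂.length < l₂.length := Nat.mod_lt _ hlen
  have hrot : l₂.rotate (t % l₂.length) = l₁ := by rw [List.rotate_mod]; exact ht
  have hhead : l₂.get ⟨t % l₂.length, hk⟩ = l₂.get ⟨0, hlen⟩ := by
    rw [← headI_rotate hk, hrot, hh, headI_eq_get' _ hlen]
  have := List.Nodup.get_inj_iff hn |>.1 hhead
  have ht0 : t % l₂.length = 0 := by simpa using this
  rw [← hrot, ht0, List.rotate_zero]

lemma startAt_isRotated (l : List ℕ) (i : ℕ) : startAt l i ~r l :=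
  ⟨_, rfl⟩ |> fun h => (List.IsRotated.symm h)

lemma headI_startAt {l : List ℕ} {i : ℕ} (hi : i ∈ l) : (startAt l i).headI = i := by
  have hk : l.idxOf i < l.length := List.idxOf_lt_length_iff.2 hi
  rw [startAt, headI_rotate hk]
  exact List.idxOf_get hk

lemma startAt_ne_nil {l : List ℕ} {i : ℕ} (hl : l ≠ []) : startAt l i ≠ [] := by
  intro h
  have := List.length_rotate l (l.idxOf i)
  rw [startAt] at h
  rw [h] at this
  exact hl (List.eq_nil_of_length_eq_zero this.symm)

lemma startAt_cons {l : List ℕ} {i : ℕ} (hi : i ∈ l) (hl : l ≠ []) :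
    startAt l i = i :: (startAt l i).tail := by
  have h1 : startAt l i ≠ [] := startAt_ne_nil hl
  cases h : startAt l i with
  | nil => exact absurd h h1
  | cons a t =>
      have : a = i := by have := headI_startAt hi; rw [h] at this; simpa using this
      subst this
      rfl

-- rotation injectivity
lemma rotate_inj {l : List ℕ} (hn : l.Nodup) (hl : l ≠ []) {k k' : ℕ}
    (hk : k < l.length) (hk' : k' < l.length) (h : l.rotate k = l.rotate k') : k = k' := by
  have := List.Nodup.rotate_congr hn hl k k' h
  rwa [Nat.mod_eq_of_lt hk, Nat.mod_eq_of_lt hk'] at this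

-- sublist equals filter
lemma sublist_eq_filter {s l : List ℕ} (p : ℕ → Bool) (hl : l.Nodup) (hs : s.Sublist l)
    (h1 : ∀ a ∈ s, p a) (h2 : ∀ a ∈ l, p a → a ∈ s) : s = l.filter p := by
  have hsf : s.filter p = s := List.filter_eq_self.2 h1
  have hsub : s.Sublist (l.filter p) := hsf ▸ hs.filter p
  have hfn : (l.filter p).Nodup := hl.filter p
  have hsub2 : (l.filter p).Subperm s :=
    hfn.subperm (fun a ha => h2 a (List.mem_of_mem_filter ha) (List.of_mem_filter ha))
  exact hsub.eq_of_length (le_antisymm hsub.length_le hsub2.length_le)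

-- perm from subset and length
lemma perm_of_subset_length {l₁ l₂ : List ℕ} (hn : l₁.Nodup) (hsub : l₁ ⊆ l₂)
    (hlen : l₂.length ≤ l₁.length) : l₂.Perm l₁ := by
  obtain ⟨l, hl, hl2⟩ := hn.subperm hsub
  have : l = l₂ := hl2.eq_of_length (le_antisymm hl2.length_le (by rw [hl.length_eq]; exact hlen))
  exact this ▸ hl

lemma headI_mem {l : List ℕ} (h : l ≠ []) : l.headI ∈ l := by
  cases l with
  | nil => exact absurd rfl h
  | cons a t => exact List.mem_cons_self (a := a) (l := t)

lemma isCyclicShuffle_comm {σ π α : List ℕ} :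
    IsCyclicShuffle σ π α ↔ IsCyclicShuffle π σ α := by
  unfold IsCyclicShuffle
  rw [Nat.add_comm]
  tauto

lemma count_aux (σ π : List ℕ) (hσ : σ.Nodup) (hπ : π.Nodup) (hσ0 : σ ≠ []) (hπ0 : π ≠ [])
    (hdisj : σ.Disjoint π) (M : ℕ) (hM : M ∈ σ) (hmax : ∀ x ∈ σ ++ π, x ≤ M) :
    {α : List ℕ | IsRep α ∧ IsCyclicShuffle σ π α}.ncard
      = π.length * ((σ.length - 1) + π.length).choose (σ.length - 1) := by
  classical
  set σ' : List ℕ := (startAt σ M).tail with hσ'def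
  have hσM : startAt σ M = M :: σ' := startAt_cons hM hσ0
  have hsArot : startAt σ M ~r σ := startAt_isRotated σ M
  have hsAperm : (startAt σ M).Perm σ := List.rotate_perm σ _
  have hsAnodup : (startAt σ M).Nodup := List.nodup_rotate.2 hσ
  have hσ'nodup : σ'.Nodup := by
    have := hsAnodup
    rw [hσM, List.nodup_cons] at this
    exact this.2
  have hMσ' : M ∉ σ' := by
    have := hsAnodup
    rw [hσM, List.nodup_cons] at this
    exact this.1
  have hσ'sub : ∀ a ∈ σ', a ∈ σ := fun a ha =>
    hsAperm.subset (hσM ▸ List.mem_cons_of_mem M ha)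
  have hMπ : M ∉ π := fun h => hdisj hM h
  have hσ'len : σ'.length + 1 = σ.length := by
    have := hsAperm.length_eq
    rw [hσM] at this
    simpa using this
  have hσπnodup : (σ ++ π).Nodup := List.Nodup.append hσ hπ hdisj
  have hn0 : 0 < π.length := List.length_pos_iff.2 hπ0
  have hdisj' : ∀ k : ℕ, σ'.Disjoint (π.rotate k) := fun k a ha hb =>
    hdisj (hσ'sub a ha) (List.mem_rotate.1 hb)
  -- the key characterization
  have key : ∀ α : List ℕ, (IsRep α ∧ IsCyclicShuffle σ π α) ↔
      ∃ k < π.length, ∃ β ∈ shuffles σ' (π.rotate k), α = M :: β := by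
    intro α
    constructor
    · rintro ⟨⟨hne, hrep⟩, hnd, hlen, ⟨i, j, hsubσ⟩, ⟨i', j', hsubπ⟩⟩
      have hσα : ∀ a ∈ σ, a ∈ α := fun a ha =>
        List.mem_rotate.1 (hsubσ.subset (List.mem_rotate.2 ha))
      have hπα : ∀ a ∈ π, a ∈ α := fun a ha =>
        List.mem_rotate.1 (hsubπ.subset (List.mem_rotate.2 ha))
      have hperm : α.Perm (σ ++ π) := by
        refine perm_of_subset_length hσπnodup ?_ ?_
        · intro a ha
          rcases List.mem_append.1 ha with h | h
          · exact hσα a h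
          · exact hπα a h
        · rw [hlen, List.length_append]
      have hhead : α.headI = M := by
        have h1 : M ≤ α.headI := hrep M (hσα M hM)
        have h2 : α.headI ≤ M := hmax _ (hperm.subset (headI_mem hne))
        omega
      obtain ⟨β, hαβ⟩ : ∃ β, α = M :: β := by
        cases hc : α with
        | nil => exact absurd hc hne
        | cons a t =>
            refine ⟨t, ?_⟩
            rw [hc] at hhead
            have ha : a = M := by simpa using hhead
            rw [ha]
      -- the σ-filter
      have hfσeq : σ.rotate i = (α.rotate j).filter (fun a => decide (a ∈ σ)) := by
        refine sublist_eq_filter _ (List.nodup_rotate.2 hnd) hsubσ ?_ ?_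
        · intro a ha; exact decide_eq_true (List.mem_rotate.1 ha)
        · intro a _ hp
          exact List.mem_rotate.2 (of_decide_eq_true hp)
      obtain ⟨j₂, hj₂⟩ := filter_rotate α (fun a => decide (a ∈ σ)) j
      have hfσrot : (α.filter (fun a => decide (a ∈ σ))) ~r σ := by
        have h2 : (α.filter (fun a => decide (a ∈ σ))) ~r σ.rotate i :=
          ⟨j₂, (hfσeq.trans hj₂).symm⟩
        have h3 : σ ~r σ.rotate i := ⟨i, rfl⟩
        exact h2.trans h3.symm
      have hfσ : α.filter (fun a => decide (a ∈ σ)) = M :: σ' := by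
        rw [← hσM]
        refine eq_of_isRotated_headI ?_ hsAnodup (startAt_ne_nil hσ0) ?_
        · exact hfσrot.trans hsArot.symm
        · rw [hαβ, List.filter_cons_of_pos (p := fun a => decide (a ∈ σ)) (a := M) (l := β)
            (decide_eq_true hM), headI_startAt hM]
          rfl
      -- the π-filter
      have hfπeq : π.rotate i' = (α.rotate j').filter (fun a => decide (a ∈ π)) := by
        refine sublist_eq_filter _ (List.nodup_rotate.2 hnd) hsubπ ?_ ?_
        · intro a ha; exact decide_eq_true (List.mem_rotate.1 ha)
        · intro a _ hp
          exact List.mem_rotate.2 (of_decide_eq_true hp)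
      obtain ⟨j₃, hj₃⟩ := filter_rotate α (fun a => decide (a ∈ π)) j'
      have hfπrot : π ~r (α.filter (fun a => decide (a ∈ π))) := by
        have h1 : (α.filter (fun a => decide (a ∈ π))) ~r (π.rotate i') :=
          ⟨j₃, (hfπeq.trans hj₃).symm⟩
        have h0 : π ~r π.rotate i' := ⟨i', rfl⟩
        exact h0.trans h1.symm
      obtain ⟨t, ht⟩ := hfπrot
      have hfπ : α.filter (fun a => decide (a ∈ π)) = π.rotate (t % π.length) := by
        rw [List.rotate_mod]; exact ht.symm
      refine ⟨t % π.length, Nat.mod_lt _ hn0, β, ?_, hαβ⟩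
      have hβσ : β.filter (fun a => decide (a ∈ σ)) = σ' := by
        have := hfσ
        rw [hαβ, List.filter_cons_of_pos (p := fun a => decide (a ∈ σ)) (a := M) (l := β)
          (decide_eq_true hM)] at this
        exact List.cons_injective.eq_iff.mp this
      have hβπ : β.filter (fun a => decide (a ∈ π)) = π.rotate (t % π.length) := by
        have := hfπ
        rwa [hαβ, List.filter_cons_of_neg (p := fun a => decide (a ∈ π)) (a := M) (l := β)
          (by simpa using hMπ)] at this
      rw [mem_shuffles_iff hσ'nodup (List.nodup_rotate.2 hπ) (hdisj' _)]
      refine ⟨hβσ ▸ List.filter_sublist (l := β), hβπ ▸ List.filter_sublist (l := β), ?_⟩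
      have hperm2 : α.Perm (M :: (σ' ++ π.rotate (t % π.length))) := by
        refine hperm.trans ?_
        have h1 : σ.Perm (M :: σ') := hσM ▸ hsAperm.symm
        have h2 : π.Perm (π.rotate (t % π.length)) := (List.rotate_perm _ _).symm
        exact (h1.append h2).trans (by rw [List.cons_append])
      rw [hαβ] at hperm2
      exact hperm2.cons_inv
    · rintro ⟨k, hk, β, hβ, rfl⟩
      obtain ⟨hs1, hs2, hs3⟩ := mem_shuffles_of hβ
      have hperm : (M :: β).Perm (σ ++ π) := by
        have h1 : (M :: σ').Perm σ := hσM ▸ hsAperm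
        have h2 : (π.rotate k).Perm π := List.rotate_perm _ _
        have := (h1.append h2)
        rw [List.cons_append] at this
        exact ((hs3.cons M).trans this)
      have hnd : (M :: β).Nodup := hperm.symm.nodup hσπnodup
      refine ⟨⟨List.cons_ne_nil _ _, ?_⟩, hnd, ?_, ?_, ?_⟩
      · intro x hx
        have : x ∈ σ ++ π := hperm.subset hx
        simpa using hmax x this
      · rw [hperm.length_eq, List.length_append]
      · exact ⟨σ.idxOf M, 0, by
          rw [List.rotate_zero]
          show (startAt σ M).Sublist (M :: β)
          rw [hσM]
          exact List.cons_sublist_cons.2 hs1⟩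
      · exact ⟨k, 0, by
          rw [List.rotate_zero]
          exact hs2.trans (List.sublist_cons_self M β)⟩
  -- convert to a Finset
  have hset : {α : List ℕ | IsRep α ∧ IsCyclicShuffle σ π α}
      = ↑((Finset.range π.length).biUnion
          (fun k => (shuffles σ' (π.rotate k)).image (M :: ·))) := by
    ext α
    simp only [Set.mem_setOf_eq, Finset.coe_biUnion, Finset.mem_coe, Finset.mem_biUnion,
      Finset.mem_range, Finset.mem_image, Set.mem_iUnion]
    rw [key α]
    constructor
    · rintro ⟨k, hk, β, hβ, rfl⟩; exact ⟨k, hk, β, hβ, rfl⟩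
    · rintro ⟨k, hk, β, hβ, rfl⟩; exact ⟨k, hk, β, hβ, rfl⟩
  rw [hset, Set.ncard_coe_finset]
  -- pairwise disjointness
  have hfilt : ∀ k (β : List ℕ), β ∈ shuffles σ' (π.rotate k) →
      β.filter (fun a => decide (a ∈ π)) = π.rotate k := by
    intro k β hβ
    obtain ⟨hs1, hs2, hs3⟩ := mem_shuffles_of hβ
    have hnd : β.Nodup := hs3.symm.nodup
      (List.Nodup.append hσ'nodup (List.nodup_rotate.2 hπ) (hdisj' k))
    refine (sublist_eq_filter _ hnd hs2 ?_ ?_).symm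
    · intro a ha; exact decide_eq_true (List.mem_rotate.1 ha)
    · intro a ha hp
      rcases List.mem_append.1 (hs3.subset ha) with h | h
      · exact absurd (of_decide_eq_true hp) (fun hc => hdisj (hσ'sub a h) hc)
      · exact h
  rw [Finset.card_biUnion]
  · have hcard : ∀ k ∈ Finset.range π.length,
        ((shuffles σ' (π.rotate k)).image (M :: ·)).card
          = ((σ.length - 1) + π.length).choose (σ.length - 1) := by
      intro k _
      rw [Finset.card_image_of_injective _ (fun p q h => by simpa using h),
        card_shuffles (hdisj' k)]
      congr 1 <;> [skip; omega] <;> rw [List.length_rotate] <;> omega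
    rw [Finset.sum_congr rfl hcard, Finset.sum_const, Finset.card_range, smul_eq_mul]
  · intro k hk k' hk' hne
    simp only [Finset.mem_coe, Finset.mem_range] at hk hk'
    refine Finset.disjoint_left.2 ?_
    rintro α hα hα'
    simp only [Finset.mem_image] at hα hα'
    obtain ⟨β, hβ, rfl⟩ := hα
    obtain ⟨β', hβ', heq⟩ := hα'
    have hββ' : β' = β := List.cons_injective.eq_iff.mp heq
    subst hββ'
    have h1 := hfilt k β' hβ
    have h2 := hfilt k' β' hβ'
    exact hne (rotate_inj hπ hπ0 hk hk' (h1 ▸ h2 ▸ rfl))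

lemma arith1 (a b : ℕ) :
    (b + 1) * ((a + (b + 1)).choose a) = ((a+1) + (b+1) - 1) * (((a+1) + (b+1) - 2).choose a) := by
  have h1 : (a+1) + (b+1) - 1 = a + b + 1 := by omega
  have h2 : (a+1) + (b+1) - 2 = a + b := by omega
  have h3 : a + (b+1) = a + b + 1 := by omega
  rw [h1, h2, h3]
  have c1 : (a+b).choose a = (a+b).choose b := by
    rw [← Nat.choose_symm (Nat.le_add_right a b)]
    congr 1
    omega
  have c2 : (a+b+1).choose a = (a+b+1).choose (b+1) := by
    rw [← Nat.choose_symm (show a ≤ a+b+1 by omega)]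
    congr 1
    omega
  calc (b+1) * (a+b+1).choose a = (a+b+1).choose (b+1) * (b+1) := by rw [c2]; ring
    _ = (a+b+1) * (a+b).choose b := (Nat.add_one_mul_choose_eq (a+b) b).symm
    _ = (a+b+1) * (a+b).choose a := by rw [c1]

lemma arith2 (a b : ℕ) :
    (a + 1) * ((b + (a + 1)).choose b) = ((a+1) + (b+1) - 1) * (((a+1) + (b+1) - 2).choose a) := by
  have h1 : (a+1) + (b+1) - 1 = a + b + 1 := by omega
  have h2 : (a+1) + (b+1) - 2 = a + b := by omega
  have h3 : b + (a+1) = a + b + 1 := by omega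
  rw [h1, h2, h3]
  have c3 : (a+b+1).choose b = (a+b+1).choose (a+1) := by
    rw [← Nat.choose_symm (show b ≤ a+b+1 by omega)]
    congr 1
    omega
  calc (a+1) * (a+b+1).choose b = (a+b+1).choose (a+1) * (a+1) := by rw [c3]; ring
    _ = (a+b+1) * (a+b).choose a := (Nat.add_one_mul_choose_eq (a+b) a).symm

/-- The number of cyclic shuffles of disjoint cyclic permutations of lengths
`m` and `n` is `(m+n-1) * (m+n-2).choose (m-1)`. -/
theorem cyclic_shuffle_count (m n : ℕ) (σ π : List ℕ) (hσ : σ.Nodup) (hπ : π.Nodup)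
    (hσ0 : σ ≠ []) (hπ0 : π ≠ []) (hdisj : σ.Disjoint π)
    (hm : σ.length = m) (hn : π.length = n) :
    {α : List ℕ | IsRep α ∧ IsCyclicShuffle σ π α}.ncard
      = (m + n - 1) * (m + n - 2).choose (m - 1) := by
  classical
  subst hm hn
  have hne : ((σ ++ π).toFinset).Nonempty :=
    ⟨σ.headI, List.mem_toFinset.2 (List.mem_append_left _ (headI_mem hσ0))⟩
  set M := ((σ ++ π).toFinset).max' hne with hMdef
  have hMmem : M ∈ σ ++ π := List.mem_toFinset.1 (Finset.max'_mem _ hne)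
  have hmax : ∀ x ∈ σ ++ π, x ≤ M := fun x hx => Finset.le_max' _ x (List.mem_toFinset.2 hx)
  obtain ⟨a, ha⟩ : ∃ a, σ.length = a + 1 :=
    ⟨σ.length - 1, by have := List.length_pos_iff.2 hσ0; omega⟩
  obtain ⟨b, hb⟩ : ∃ b, π.length = b + 1 :=
    ⟨π.length - 1, by have := List.length_pos_iff.2 hπ0; omega⟩
  rcases List.mem_append.1 hMmem with hMσ | hMπ
  · rw [count_aux σ π hσ hπ hσ0 hπ0 hdisj M hMσ hmax, ha, hb]
    simpa using arith1 a b
  · have hsymm : {α : List ℕ | IsRep α ∧ IsCyclicShuffle σ π α}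
        = {α : List ℕ | IsRep α ∧ IsCyclicShuffle π σ α} := by
      ext α
      simp only [Set.mem_setOf_eq]
      rw [isCyclicShuffle_comm]
    rw [hsymm, count_aux π σ hπ hσ hπ0 hσ0 (fun x hx hy => hdisj hy hx) M hMπ
      (fun x hx => hmax x (List.mem_append.2 (List.mem_append.1 hx).symm)), ha, hb]
    simpa using arith2 a b
end

section
/- Let [σ] and [π] be disjoint cyclic permutations of lengths m and n respectively, with the overall largest letter lying in [σ], and let σ̂ = σ̂_1⋯σ̂_m be the linear representative of [σ] starting with its largest letter, σ̂' = σ̂_2⋯σ̂_m. Then the map sending a cyclic shuffle [α] of [σ] and [π] to α̂' = α̂_2⋯α̂_{m+n}, where α̂ is the representative of [α] starting with the largest letter, is a bijection from the set of cyclic shuffles of [σ] and [π] onto the union over letters i of [π] of the sets of linear shuffles of σ̂' and S_i([π]). -/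
open Polynomial

private lemma headI_cons_tail' {l : List ℕ} (h : l ≠ []) : l = l.headI :: l.tail := by
  cases l with
  | nil => exact absurd rfl h
  | cons a t => rfl

private lemma sublist_of_cons_not_mem {a : ℕ} {l T : List ℕ} (h : l.Sublist (a :: T))
    (ha : a ∉ l) : l.Sublist T := by
  cases h with
  | cons _ h => exact h
  | cons_cons _ h => exact absurd (List.mem_cons_self) ha

private lemma key_split {M : ℕ} : ∀ (D d t T : List ℕ), M ∉ d → M ∉ D → M ∉ T →
    (d ++ M :: t).Sublist (D ++ M :: T) → d.Sublist D ∧ t.Sublist T := by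
  intro D
  induction D with
  | nil =>
    intro d t T hd hD hT h
    simp only [List.nil_append] at h
    cases d with
    | nil =>
      simp only [List.nil_append] at h
      cases h with
      | cons _ h => exact absurd (h.subset (List.mem_cons_self)) hT
      | cons_cons _ h => exact ⟨List.nil_sublist _, h⟩
    | cons x d' =>
      simp only [List.cons_append] at h
      cases h with
      | cons _ h => exact absurd (h.subset (by simp)) hT
      | cons_cons _ h => exact absurd (List.mem_cons_self) hd
  | cons y D' ih =>
    intro d t T hd hD hT h
    simp only [List.cons_append] at h
    cases d with
    | nil =>
      simp only [List.nil_append] at h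
      have hy : M ≠ y := fun e => hD (e ▸ List.mem_cons_self)
      cases h with
      | cons _ h =>
        obtain ⟨h1, h2⟩ := ih [] t T (by simp) (fun hc => hD (List.mem_cons_of_mem _ hc)) hT
          (by simpa using h)
        exact ⟨List.nil_sublist _, h2⟩
      | cons_cons _ h => exact absurd rfl hy
    | cons x d' =>
      simp only [List.cons_append] at h
      have hxd : M ∉ d' := fun hc => hd (List.mem_cons_of_mem _ hc)
      have hD' : M ∉ D' := fun hc => hD (List.mem_cons_of_mem _ hc)
      cases h with
      | cons _ h =>
        obtain ⟨h1, h2⟩ := ih (x :: d') t T hd hD' hT (by simpa using h)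
        exact ⟨h1.cons _, h2⟩
      | cons_cons _ h =>
        obtain ⟨h1, h2⟩ := ih d' t T hxd hD' hT h
        exact ⟨h1.cons₂ _, h2⟩

private lemma rotate_decomp (M : ℕ) (l' : List ℕ) (j : ℕ) :
    ∃ T D : List ℕ, (M :: l').rotate j = D ++ M :: T ∧ T ++ D = l' := by
  rw [← List.rotate_mod]
  have hlen : j % (M :: l').length < (M :: l').length := Nat.mod_lt _ (by simp)
  set k := j % (M :: l').length with hk
  clear_value k
  cases k with
  | zero => exact ⟨l', [], by simp, by simp⟩
  | succ k' =>
    refine ⟨l'.take k', l'.drop k', ?_, by simp⟩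
    rw [List.rotate_eq_drop_append_take (le_of_lt hlen)]
    simp


private lemma rotate_eq_startAt {π : List ℕ} (hπ : π.Nodup) (h0 : π ≠ []) (k : ℕ) :
    ∃ i ∈ π, startAt π i = π.rotate k := by
  rw [← List.rotate_mod]
  have hk : k % π.length < π.length := Nat.mod_lt _ (List.length_pos_iff.mpr h0)
  refine ⟨π[k % π.length], List.getElem_mem hk, ?_⟩
  unfold startAt
  rw [List.Nodup.idxOf_getElem hπ _ hk]

/-- The bijection between cyclic shuffles of `[σ]` and `[π]` and the union over
letters `i` of `[π]` of the linear shuffles of `σ̂'` and `S_i([π])`. -/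
theorem cyclic_shuffle_bijection (σ π : List ℕ) (hσ : σ.Nodup) (hπ : π.Nodup)
    (hσ0 : σ ≠ []) (hπ0 : π ≠ []) (hdisj : σ.Disjoint π) (hrep : IsRep σ)
    (hmax : ∀ x ∈ π, x < σ.headI) :
    Set.BijOn (fun α => α.tail) {α : List ℕ | IsRep α ∧ IsCyclicShuffle σ π α}
      (⋃ i ∈ {i | i ∈ π}, {β : List ℕ | IsShuffle σ.tail (startAt π i) β}) := by
  classical
  obtain ⟨-, hσle⟩ := hrep
  set M := σ.headI with hMdef
  have hσc : σ = M :: σ.tail := headI_cons_tail' hσ0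
  have hMσ : M ∈ σ := by rw [hσc]; exact List.mem_cons_self
  have hσtn : σ.tail.Nodup := hσ.sublist (List.tail_sublist σ)
  have hMσt : M ∉ σ.tail := by
    have h := hσ; rw [hσc] at h; exact (List.nodup_cons.mp h).1
  have hMπ : M ∉ π := fun h => lt_irrefl M (hmax M h)
  have hlenσ : 0 < σ.length := List.length_pos_iff.mpr hσ0
  have hfact : ∀ α ∈ {α : List ℕ | IsRep α ∧ IsCyclicShuffle σ π α},
      α = M :: α.tail ∧ M ∉ α.tail := by
    rintro α ⟨⟨hα0, hαle⟩, hαnd, hαlen, ⟨i₁, j₁, hs1⟩, ⟨i₂, j₂, hs2⟩⟩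
    have hσsubα : σ ⊆ α := fun x hx => List.mem_rotate.mp (hs1.subset (List.mem_rotate.mpr hx))
    have hπsubα : π ⊆ α := fun x hx => List.mem_rotate.mp (hs2.subset (List.mem_rotate.mpr hx))
    have hMα : M ∈ α := hσsubα hMσ
    have hperm : α.Perm (σ ++ π) := by
      have hnd : (σ ++ π).Nodup := List.Nodup.append hσ hπ hdisj
      have hsub : (σ ++ π) ⊆ α := by
        intro x hx
        rcases List.mem_append.mp hx with h | h
        exacts [hσsubα h, hπsubα h]
      exact ((hnd.subperm hsub).perm_of_length_le (by simp [hαlen])).symm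
    have hub : ∀ x ∈ α, x ≤ M := by
      intro x hx
      rcases List.mem_append.mp (hperm.subset hx) with h | h
      · exact hσle x h
      · exact le_of_lt (hmax x h)
    have hhead : α.headI = M :=
      le_antisymm (hub _ (by rw [headI_cons_tail' hα0]; exact List.mem_cons_self))
        (hαle M hMα)
    have hαc : α = M :: α.tail := by rw [← hhead]; exact headI_cons_tail' hα0
    refine ⟨hαc, ?_⟩
    have h := hαnd; rw [hαc] at h; exact (List.nodup_cons.mp h).1
  refine ⟨?_, ?_, ?_⟩
  · -- MapsTo
    intro α hα
    obtain ⟨hαc, hMαt⟩ := hfact α hα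
    obtain ⟨⟨hα0, hαle⟩, hαnd, hαlen, ⟨i₁, j₁, hs1⟩, ⟨i₂, j₂, hs2⟩⟩ := hα
    obtain ⟨t, d, hσrot, htd⟩ := rotate_decomp M σ.tail i₁
    obtain ⟨T, D, hαrot, hTD⟩ := rotate_decomp M α.tail j₁
    obtain ⟨T₂, D₂, hαrot₂, hTD₂⟩ := rotate_decomp M α.tail j₂
    rw [hσc, hαc, hσrot, hαrot] at hs1
    rw [hαc, hαrot₂] at hs2
    have hMt : M ∉ t := fun hc => hMσt (htd ▸ List.mem_append.mpr (Or.inl hc))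
    have hMd : M ∉ d := fun hc => hMσt (htd ▸ List.mem_append.mpr (Or.inr hc))
    have hMT : M ∉ T := fun hc => hMαt (hTD ▸ List.mem_append.mpr (Or.inl hc))
    have hMD : M ∉ D := fun hc => hMαt (hTD ▸ List.mem_append.mpr (Or.inr hc))
    have hMT₂ : M ∉ T₂ := fun hc => hMαt (hTD₂ ▸ List.mem_append.mpr (Or.inl hc))
    obtain ⟨hdD, htT⟩ := key_split D d t T hMd hMD hMT hs1
    have hσtsub : σ.tail.Sublist α.tail := by
      rw [← htd, ← hTD]; exact htT.append hdD
    -- π part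
    obtain ⟨a, b, hab, haD, hbT⟩ := List.sublist_append_iff.mp hs2
    have hMb : M ∉ b := by
      intro hc
      exact hMπ (List.mem_rotate.mp (hab ▸ List.mem_append.mpr (Or.inr hc)))
    have hb : b.Sublist T₂ := sublist_of_cons_not_mem hbT hMb
    have hrotsub : (π.rotate (i₂ + a.length)).Sublist α.tail := by
      have h1 : π.rotate (i₂ + a.length) = b ++ a := by
        rw [← List.rotate_rotate, hab, List.rotate_append_length_eq]
      rw [h1, ← hTD₂]
      exact hb.append haD
    obtain ⟨i, hiπ, hstart⟩ := rotate_eq_startAt hπ hπ0 (i₂ + a.length)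
    simp only [Set.mem_iUnion, Set.mem_setOf_eq]
    refine ⟨i, hiπ, ?_, hσtsub, ?_, ?_⟩
    · exact hαnd.sublist (List.tail_sublist α)
    · rw [hstart]; exact hrotsub
    · have h1 : α.tail.length + 1 = α.length := by rw [hαc]; simp
      have h2 : σ.tail.length + 1 = σ.length := by rw [hσc]; simp
      have h3 : (startAt π i).length = π.length := List.length_rotate _ _
      omega
  · -- InjOn
    intro α₁ h₁ α₂ h₂ he
    obtain ⟨hc1, -⟩ := hfact _ h₁
    obtain ⟨hc2, -⟩ := hfact _ h₂
    simp only at he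
    rw [hc1, hc2, he]
  · -- SurjOn
    intro β hβ
    simp only [Set.mem_iUnion, Set.mem_setOf_eq] at hβ
    obtain ⟨i, hiπ, hβnd, hσt, hπt, hβlen⟩ := hβ
    have hrotnd : (startAt π i).Nodup := List.nodup_rotate.mpr hπ
    have hrotmem : ∀ x, x ∈ startAt π i ↔ x ∈ π := fun x => List.mem_rotate
    have hperm : (σ.tail ++ startAt π i).Perm β := by
      have hnd : (σ.tail ++ startAt π i).Nodup := by
        refine hσtn.append hrotnd ?_
        intro x hx hx'
        exact hdisj ((List.tail_sublist σ).subset hx) ((hrotmem x).mp hx')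
      have hsub : (σ.tail ++ startAt π i) ⊆ β := by
        intro x hx
        rcases List.mem_append.mp hx with h | h
        exacts [hσt.subset h, hπt.subset h]
      exact (hnd.subperm hsub).perm_of_length_le (by simp [hβlen])
    have hmemβ : ∀ x ∈ β, x ∈ σ.tail ∨ x ∈ π := by
      intro x hx
      rcases List.mem_append.mp (hperm.symm.subset hx) with h | h
      · exact Or.inl h
      · exact Or.inr ((hrotmem x).mp h)
    have hMβ : M ∉ β := by
      intro hc
      rcases hmemβ M hc with h | h
      exacts [hMσt h, hMπ h]
    refine ⟨M :: β, ⟨⟨?_, ?_⟩, ?_, ?_, ?_, ?_⟩, rfl⟩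
    · simp
    · intro x hx
      simp only [List.headI_cons]
      rcases List.mem_cons.mp hx with rfl | hx
      · exact le_refl _
      · rcases hmemβ x hx with h | h
        · exact hσle x ((List.tail_sublist σ).subset h)
        · exact le_of_lt (hmax x h)
    · exact List.nodup_cons.mpr ⟨hMβ, hβnd⟩
    · have h2 : σ.tail.length + 1 = σ.length := by rw [hσc]; simp
      have h3 : (startAt π i).length = π.length := List.length_rotate _ _
      simp only [List.length_cons]
      omega
    · refine ⟨0, 0, ?_⟩
      rw [List.rotate_zero, List.rotate_zero, hσc]
      exact hσt.cons₂ _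
    · refine ⟨π.idxOf i, 0, ?_⟩
      rw [List.rotate_zero]
      exact (hπt.trans (List.sublist_cons_self _ _))
end

section
/- With notation as in the bijection ψ from cyclic shuffles of [σ] and [π] to linear shuffles (where [σ], [π] are disjoint cyclic permutations and the largest letter lies in [σ]): for every cyclic shuffle [α], writing α̂' = ψ([α]), one has cdes([α]) = des(α̂') + 1 and maj([α]) = maj(α̂') + des(α̂') + 1. -/
open Polynomial

lemma getD_mem_of_lt (t : List ℕ) {i : ℕ} (h : i < t.length) : t.getD i 0 ∈ t := by
  rw [List.getD_eq_getElem _ _ h]; exact List.getElem_mem h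

lemma cdesSet_cons (a : ℕ) (t : List ℕ) (ht : t ≠ []) (hlt : ∀ x ∈ t, x < a) :
    cdesSet (a :: t) = insert 1 ((desSet t).image (· + 1)) := by
  have hm : 1 ≤ t.length := List.length_pos_iff.mpr ht
  ext x
  simp only [cdesSet, desSet, Finset.mem_filter, Finset.mem_Icc, Finset.mem_insert,
    Finset.mem_image, List.length_cons]
  constructor
  · rintro ⟨⟨h1, h2⟩, hcond⟩
    obtain ⟨j, rfl⟩ : ∃ j, x = j + 1 := ⟨x - 1, by omega⟩
    rcases Nat.eq_or_lt_of_le h2 with heq | hlt2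
    · exfalso
      have hmod : (j + 1) % (t.length + 1) = 0 := by rw [heq]; exact Nat.mod_self _
      rw [hmod] at hcond
      simp only [List.getD_cons_zero, Nat.add_sub_cancel] at hcond
      have hj : j = t.length := by omega
      obtain ⟨k, hk⟩ : ∃ k, j = k + 1 := ⟨j - 1, by omega⟩
      rw [hk, List.getD_cons_succ] at hcond
      have hmem : t.getD k 0 ∈ t := getD_mem_of_lt t (by omega)
      exact absurd hcond (by have := hlt _ hmem; omega)
    · have hmod : (j + 1) % (t.length + 1) = j + 1 := Nat.mod_eq_of_lt (by omega)
      rw [hmod] at hcond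
      simp only [Nat.add_sub_cancel, List.getD_cons_succ] at hcond
      rcases Nat.eq_zero_or_pos j with rfl | hj
      · exact Or.inl rfl
      · right
        obtain ⟨k, rfl⟩ : ∃ k, j = k + 1 := ⟨j - 1, by omega⟩
        rw [List.getD_cons_succ] at hcond
        exact ⟨k + 1, ⟨⟨by omega, by omega⟩, by simpa using hcond⟩, rfl⟩
  · rintro (rfl | ⟨j, ⟨⟨hj1, hj2⟩, hc⟩, rfl⟩)
    · refine ⟨⟨le_refl 1, by omega⟩, ?_⟩
      have hmod : 1 % (t.length + 1) = 1 := Nat.mod_eq_of_lt (by omega)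
      rw [hmod]
      simp only [List.getD_cons_succ, List.getD_cons_zero, Nat.sub_self]
      exact hlt _ (getD_mem_of_lt t (by omega))
    · refine ⟨⟨by omega, by omega⟩, ?_⟩
      have hmod : (j + 1) % (t.length + 1) = j + 1 := Nat.mod_eq_of_lt (by omega)
      rw [hmod]
      simp only [Nat.add_sub_cancel, List.getD_cons_succ]
      obtain ⟨k, rfl⟩ : ∃ k, j = k + 1 := ⟨j - 1, by omega⟩
      rw [List.getD_cons_succ]
      simpa using hc


lemma desSet_cons (a : ℕ) (t : List ℕ) (ht : t ≠ []) (hlt : ∀ x ∈ t, x < a) :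
    desSet (a :: t) = insert 1 ((desSet t).image (· + 1)) := by
  have hm : 1 ≤ t.length := List.length_pos_iff.mpr ht
  ext x
  simp only [desSet, Finset.mem_filter, Finset.mem_Icc, Finset.mem_insert,
    Finset.mem_image, List.length_cons, Nat.add_sub_cancel]
  constructor
  · rintro ⟨⟨h1, h2⟩, hcond⟩
    obtain ⟨j, rfl⟩ : ∃ j, x = j + 1 := ⟨x - 1, by omega⟩
    simp only [Nat.add_sub_cancel, List.getD_cons_succ] at hcond
    rcases Nat.eq_zero_or_pos j with rfl | hj
    · exact Or.inl rfl
    · right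
      obtain ⟨k, rfl⟩ : ∃ k, j = k + 1 := ⟨j - 1, by omega⟩
      rw [List.getD_cons_succ] at hcond
      exact ⟨k + 1, ⟨⟨by omega, by omega⟩, by simpa using hcond⟩, rfl⟩
  · rintro (rfl | ⟨j, ⟨⟨hj1, hj2⟩, hc⟩, rfl⟩)
    · refine ⟨⟨le_refl 1, hm⟩, ?_⟩
      simp only [List.getD_cons_succ, List.getD_cons_zero, Nat.sub_self]
      exact hlt _ (getD_mem_of_lt t (by omega))
    · refine ⟨⟨by omega, by omega⟩, ?_⟩
      simp only [Nat.add_sub_cancel, List.getD_cons_succ]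
      obtain ⟨k, rfl⟩ : ∃ k, j = k + 1 := ⟨j - 1, by omega⟩
      rw [List.getD_cons_succ]
      simpa using hc

lemma one_not_mem_image (t : List ℕ) : 1 ∉ (desSet t).image (· + 1) := by
  simp only [Finset.mem_image, desSet, Finset.mem_filter, Finset.mem_Icc, not_exists]
  rintro j ⟨⟨⟨hj1, _⟩, _⟩, h⟩
  omega

/-- For the representative `α` of a cyclic shuffle, `cdes([α]) = des(α̂') + 1` and
`maj([α]) = maj(α̂') + des(α̂') + 1`, where `α̂'` is `α` with the first letter removed. -/
theorem cdes_maj_of_cyclic_shuffle (σ π α : List ℕ) (hσ : σ.Nodup) (hπ : π.Nodup)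
    (hσ0 : σ ≠ []) (hπ0 : π ≠ []) (hdisj : σ.Disjoint π) (hrep : IsRep σ)
    (hmax : ∀ x ∈ π, x < σ.headI)
    (hα : IsRep α ∧ IsCyclicShuffle σ π α) :
    cdes α = des α.tail + 1 ∧ maj α = maj α.tail + des α.tail + 1 := by
  obtain ⟨hrepα, hnd, hlen, _⟩ := hα
  obtain ⟨hne, hmaxα⟩ := hrepα
  obtain _ | ⟨a, t⟩ := α
  · exact absurd rfl hne
  have hσl : 1 ≤ σ.length := List.length_pos_iff.mpr hσ0
  have hπl : 1 ≤ π.length := List.length_pos_iff.mpr hπ0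
  have ht : t ≠ [] := by
    intro h
    simp [h] at hlen
    omega
  have hlt : ∀ x ∈ t, x < a := by
    intro x hx
    have h1 : x ≤ a := hmaxα x (List.mem_cons_of_mem _ hx)
    have h2 : x ≠ a := by
      rintro rfl
      exact (List.nodup_cons.mp hnd).1 hx
    omega
  have hset : cdesSet (a :: t) = insert 1 ((desSet t).image (· + 1)) :=
    cdesSet_cons a t ht hlt
  have hinj : Set.InjOn (· + 1) (desSet t) := fun x _ y _ h => by simpa using h
  have htail : (a :: t).tail = t := rfl
  have hsetd : desSet (a :: t) = insert 1 ((desSet t).image (· + 1)) :=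
    desSet_cons a t ht hlt
  constructor
  · rw [cdes, hset, Finset.card_insert_of_notMem (one_not_mem_image t),
      Finset.card_image_of_injOn hinj, htail, des]
  · rw [maj, hsetd, Finset.sum_insert (one_not_mem_image t),
      Finset.sum_image (fun x hx y hy h => by simpa using h), htail]
    simp only [maj, des, Finset.sum_add_distrib, Finset.sum_const, smul_eq_mul, mul_one]
    omega
end

section
/- For integers m, n, r, s, k with 0 ≤ r ≤ m, 0 ≤ s ≤ n, the identity (n−s)·C(m−r+s, k−r)·C(n−s+r−1, n−k+r) + s·C(m−r+s−1, k−r)·C(n−s+r, n−k+r) = (k(m−r)(n−s) + (m+n−k)rs)/((m−r+s)(n−s+r)) · C(m−r+s, k−r) · C(n−s+r, k−s) holds (whenever m−r+s > 0 and n−s+r > 0). -/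
open Polynomial

lemma L1 (a : ℕ) (i : ℤ) : (a : ℚ) * chooseZ (a - 1) i = ((a : ℚ) - i) * chooseZ a i := by
  unfold chooseZ
  split_ifs with h
  · obtain ⟨t, rfl⟩ := Int.eq_ofNat_of_zero_le h
    simp only [Int.toNat_natCast]
    rcases a with _ | c
    · rcases t with _ | t <;> simp
    · simp only [Nat.add_sub_cancel]
      rcases le_or_gt t (c+1) with ht | ht
      · have := Nat.choose_mul_succ_eq c t
        have hq : ((c.choose t : ℚ)) * (c+1) = ((c+1).choose t : ℚ) * ((c+1-t : ℕ) : ℚ) := by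
          exact_mod_cast congrArg (Nat.cast : ℕ → ℚ) this
        rw [Nat.cast_sub ht] at hq
        push_cast at hq ⊢
        linarith [hq]
      · rw [Nat.choose_eq_zero_of_lt (by omega), Nat.choose_eq_zero_of_lt ht]
        simp
  · simp

lemma L2 (b : ℕ) (j : ℤ) : chooseZ b ((b : ℤ) - j) = chooseZ b j := by
  unfold chooseZ
  split_ifs with h h' h'
  · rcases le_or_gt j (b:ℤ) with hj | hj
    · obtain ⟨t, rfl⟩ := Int.eq_ofNat_of_zero_le h'
      have ht : t ≤ b := by exact_mod_cast hj
      have : ((b:ℤ) - t).toNat = b - t := by omega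
      rw [this, Nat.choose_symm ht, Int.toNat_natCast]
    · rw [Nat.choose_eq_zero_of_lt (by omega), Nat.choose_eq_zero_of_lt (by omega)]
  · rw [Nat.choose_eq_zero_of_lt (by omega)]
  · rw [Nat.choose_eq_zero_of_lt (by omega)]
  · rfl

/-- The binomial identity used to deduce the AGRR formula. -/
theorem binomial_identity (m n r s : ℕ) (k : ℤ) (hr : r ≤ m) (hs : s ≤ n)
    (h1 : 0 < m - r + s) (h2 : 0 < n - s + r) :
    ((n - s : ℕ) : ℚ) * chooseZ (m - r + s) (k - r) * chooseZ (n - s + r - 1) ((n : ℤ) - k + r)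
      + (s : ℚ) * chooseZ (m - r + s - 1) (k - r) * chooseZ (n - s + r) ((n : ℤ) - k + r)
      = ((k : ℚ) * ((m : ℚ) - r) * ((n : ℚ) - s) + ((m : ℚ) + n - k) * r * s)
          / ((((m : ℚ) - r) + s) * (((n : ℚ) - s) + r))
        * chooseZ (m - r + s) (k - r) * chooseZ (n - s + r) (k - s) := by
  set a := m - r + s with hadef
  set b := n - s + r with hbdef
  have ha' : ((a : ℚ)) ≠ 0 := by exact_mod_cast h1.ne'
  have hb' : ((b : ℚ)) ≠ 0 := by exact_mod_cast h2.ne'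
  have hbz : ((n : ℤ) - k + r) = (b : ℤ) - (k - s) := by
    have : (b : ℤ) = (n : ℤ) - s + r := by omega
    omega
  have ca : ((a : ℚ)) = (m : ℚ) - r + s := by
    have : (a : ℤ) = (m : ℤ) - r + s := by omega
    exact_mod_cast congrArg (fun z : ℤ => (z : ℚ)) this
  have cb : ((b : ℚ)) = (n : ℚ) - s + r := by
    have : (b : ℤ) = (n : ℤ) - s + r := by omega
    exact_mod_cast congrArg (fun z : ℤ => (z : ℚ)) this
  have hns : (((n - s : ℕ)) : ℚ) = (b : ℚ) - r := by
    have : ((n - s : ℕ) : ℤ) = (b : ℤ) - r := by omega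
    exact_mod_cast congrArg (fun z : ℤ => (z : ℚ)) this
  have E1 : ((chooseZ (a - 1) (k - r) : ℚ)) =
      (((a : ℚ) - ((k : ℚ) - r)) * chooseZ a (k - r)) / a := by
    have := L1 a (k - r)
    rw [eq_div_iff ha', mul_comm _ ((a : ℚ))]
    push_cast at this ⊢
    linarith [this]
  have E2 : ((chooseZ (b - 1) ((b : ℤ) - (k - s)) : ℚ)) =
      (((k : ℚ) - s) * chooseZ b (k - s)) / b := by
    have h := L1 b ((b : ℤ) - (k - s))
    rw [L2 b (k - s)] at h
    rw [eq_div_iff hb', mul_comm _ ((b : ℚ))]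
    push_cast at h ⊢
    linarith [h]
  rw [hbz, L2 b (k - s), E1, E2, hns, ← ca, ← cb]
  have hm : (m : ℚ) = (a : ℚ) + r - s := by rw [ca]; ring
  have hn : (n : ℚ) = (b : ℚ) + s - r := by rw [cb]; ring
  rw [hm, hn]
  field_simp
  ring
end

section
/- Summing the Adin–Gessel–Reiner–Roichman formula over all k recovers the total count: Σ_k (k(m−r)(n−s)+(m+n−k)rs)/((m−r+s)(n−s+r)) · C(m−r+s, k−r) · C(n−s+r, k−s) = (m+n−1)·C(m+n−2, m−1), for integers 0 < r ≤ m and 0 < s ≤ n with m−r+s > 0 and n−s+r > 0. -/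
open Polynomial

lemma chooseZ_of_neg {a : ℕ} {b : ℤ} (h : b < 0) : chooseZ a b = 0 := by
  simp [chooseZ, not_le.mpr h]

lemma chooseZ_coe (a k : ℕ) : chooseZ a (k : ℤ) = a.choose k := by
  simp [chooseZ]

lemma chooseZ_of_gt {a : ℕ} {b : ℤ} (h : (a : ℤ) < b) : chooseZ a b = 0 := by
  unfold chooseZ
  rw [if_pos (by omega)]
  exact Nat.choose_eq_zero_of_lt (by omega)

lemma chooseZ_symm (B : ℕ) (t : ℤ) : chooseZ B t = chooseZ B (B - t) := by
  rcases lt_or_ge t 0 with h | h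
  · rw [chooseZ_of_neg h, chooseZ_of_gt (by omega)]
  rcases le_or_gt t (B : ℤ) with h2 | h2
  · lift t to ℕ using h
    have hle : t ≤ B := by exact_mod_cast h2
    have he : (B : ℤ) - t = ((B - t : ℕ) : ℤ) := by omega
    rw [he, chooseZ_coe, chooseZ_coe, Nat.choose_symm hle]
  · rw [chooseZ_of_gt h2, chooseZ_of_neg (by omega)]

lemma mul_chooseZ (A : ℕ) (hA : 0 < A) (t : ℤ) :
    (t : ℚ) * chooseZ A t = (A : ℚ) * chooseZ (A - 1) (t - 1) := by
  rcases lt_or_ge t 0 with h | h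
  · rw [chooseZ_of_neg h, chooseZ_of_neg (by omega)]; ring
  rcases eq_or_lt_of_le h with h0 | h0
  · rw [← h0, chooseZ_of_neg (show (0:ℤ) - 1 < 0 by omega)]; simp
  lift t to ℕ using h
  have ht : 0 < t := by exact_mod_cast h0
  have he : (t : ℤ) - 1 = ((t - 1 : ℕ) : ℤ) := by omega
  rw [he, chooseZ_coe, chooseZ_coe]
  have key : A * (A - 1).choose (t - 1) = A.choose t * t := by
    have h := Nat.add_one_mul_choose_eq (A - 1) (t - 1)
    have hA' : A - 1 + 1 = A := by omega
    have ht' : t - 1 + 1 = t := by omega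
    simp only [Nat.succ_eq_add_one, hA', ht'] at h
    exact h
  have := congrArg (fun x : ℕ => (x : ℚ)) key
  push_cast at this
  push_cast
  linarith [this]

lemma finsum_vdm (A B : ℕ) (u v : ℤ) :
    ∑ᶠ k : ℤ, ((chooseZ A (k - u) : ℚ) * chooseZ B (v - k)) = chooseZ (A + B) (v - u) := by
  have hre := finsum_comp_equiv (Equiv.addRight u)
    (f := fun k : ℤ => ((chooseZ A (k - u) : ℚ) * chooseZ B (v - k)))
  rw [← hre]
  simp only [Equiv.coe_addRight, add_sub_cancel_right]
  have hvk : ∀ i : ℤ, v - (i + u) = (v - u) - i := fun i => by ring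
  rcases lt_or_ge (v - u) 0 with hneg | hpos
  · rw [chooseZ_of_neg hneg]
    push_cast
    apply finsum_eq_zero_of_forall_eq_zero
    intro i
    rcases lt_or_ge i 0 with hi | hi
    · rw [chooseZ_of_neg hi]; simp
    · rw [hvk i, chooseZ_of_neg (show v - u - i < 0 by omega)]; simp
  · obtain ⟨wn, hwn⟩ : ∃ wn : ℕ, v - u = (wn : ℤ) := ⟨(v - u).toNat, by omega⟩
    rw [hwn, chooseZ_coe]
    have hfe : (fun i : ℤ => (chooseZ A i : ℚ) * chooseZ B (v - (i + u)))
        = fun i : ℤ => (chooseZ A i : ℚ) * chooseZ B ((wn : ℤ) - i) := by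
      funext i
      rw [hvk i, hwn]
    rw [hfe]
    set S : Finset ℤ := (Finset.range (wn + 1)).map ⟨((↑·) : ℕ → ℤ), Nat.cast_injective⟩ with hS
    rw [finsum_eq_sum_of_support_subset _ (s := S) ?_]
    swap
    · intro i hi
      simp only [Function.mem_support] at hi
      have h1 : 0 ≤ i := by
        by_contra h
        rw [chooseZ_of_neg (show i < 0 by omega)] at hi; simp at hi
      have h2 : i ≤ (wn : ℤ) := by
        by_contra h
        rw [chooseZ_of_neg (show (wn : ℤ) - i < 0 by omega)] at hi; simp at hi
      simp only [hS, Finset.coe_map, Set.mem_image, Finset.mem_coe, Finset.mem_range,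
        Function.Embedding.coeFn_mk]
      exact ⟨i.toNat, by omega, by omega⟩
    · rw [Finset.sum_map]
      simp only [Function.Embedding.coeFn_mk]
      have hterm : ∀ j ∈ Finset.range (wn + 1),
          ((chooseZ A ((j : ℤ)) : ℚ) * chooseZ B ((wn : ℤ) - j)) =
            ((A.choose j * B.choose (wn - j) : ℕ) : ℚ) := by
        intro j hj
        have hj' : j ≤ wn := by simpa [Nat.lt_succ_iff] using hj
        have he : (wn : ℤ) - j = ((wn - j : ℕ) : ℤ) := by omega
        rw [he, chooseZ_coe, chooseZ_coe]
        push_cast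
        ring
      calc ∑ j ∈ Finset.range (wn + 1), ((chooseZ A ((j : ℤ)) : ℚ) * chooseZ B ((wn : ℤ) - j))
          = ∑ j ∈ Finset.range (wn + 1), ((A.choose j * B.choose (wn - j) : ℕ) : ℚ) :=
            Finset.sum_congr rfl hterm
        _ = (((A + B).choose wn : ℕ) : ℚ) := by
            rw [← Nat.cast_sum]
            congr 1
            rw [Nat.add_choose_eq, Finset.Nat.sum_antidiagonal_eq_sum_range_succ_mk]
        _ = (((A + B).choose wn : ℕ) : ℚ) := by norm_num

/-- Summing the AGRR formula over all integers `k` recovers the total number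
of cyclic shuffles. -/
theorem sum_AGRR (m n r s : ℕ) (hr : 0 < r) (hrm : r ≤ m) (hs : 0 < s) (hsn : s ≤ n)
    (h1 : 0 < m - r + s) (h2 : 0 < n - s + r) :
    ∑ᶠ k : ℤ, ((k : ℚ) * ((m : ℚ) - r) * ((n : ℚ) - s) + ((m : ℚ) + n - k) * r * s)
        / ((((m : ℚ) - r) + s) * (((n : ℚ) - s) + r))
        * chooseZ (m - r + s) (k - r) * chooseZ (n - s + r) (k - s)
      = (((m + n - 1) * (m + n - 2).choose (m - 1) : ℕ) : ℚ) := by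
  have hm : 0 < m := lt_of_lt_of_le hr hrm
  have hn : 0 < n := lt_of_lt_of_le hs hsn
  set A := m - r + s with hA
  set B := n - s + r with hB
  have hAc : ((A : ℕ) : ℚ) = (m : ℚ) - r + s := by
    rw [hA]; push_cast [hrm]; ring
  have hBc : ((B : ℕ) : ℚ) = (n : ℚ) - s + r := by
    rw [hB]; push_cast [hsn]; ring
  have hA0 : (0 : ℚ) < (m : ℚ) - r + s := by rw [← hAc]; exact_mod_cast h1
  have hB0 : (0 : ℚ) < (n : ℚ) - s + r := by rw [← hBc]; exact_mod_cast h2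
  have hBz : (B : ℤ) = (n : ℤ) - s + r := by omega
  -- the two coefficients
  set c1 : ℚ := (((m : ℚ) - r) * ((n : ℚ) - s) - r * s) * ((m : ℚ) - r + s)
      / ((((m : ℚ) - r) + s) * (((n : ℚ) - s) + r)) with hc1
  set c0 : ℚ := ((r : ℚ) * ((m : ℚ) - r) * ((n : ℚ) - s) + ((m : ℚ) + n - r) * r * s)
      / ((((m : ℚ) - r) + s) * (((n : ℚ) - s) + r)) with hc0
  have key : ∀ k : ℤ,
      ((k : ℚ) * ((m : ℚ) - r) * ((n : ℚ) - s) + ((m : ℚ) + n - k) * r * s)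
          / ((((m : ℚ) - r) + s) * (((n : ℚ) - s) + r))
          * chooseZ A (k - r) * chooseZ B (k - s)
        = c1 * ((chooseZ (A - 1) (k - ((r : ℤ) + 1)) : ℚ) * chooseZ B ((B : ℤ) + s - k))
          + c0 * ((chooseZ A (k - r) : ℚ) * chooseZ B ((B : ℤ) + s - k)) := by
    intro k
    have hsym : chooseZ B (k - s) = chooseZ B ((B : ℤ) + s - k) := by
      rw [chooseZ_symm B (k - s)]; congr 1; ring
    have hmc := mul_chooseZ A h1 (k - r)
    have hsh : chooseZ (A - 1) (k - r - 1) = chooseZ (A - 1) (k - ((r : ℤ) + 1)) := by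
      congr 1; ring
    rw [hsh] at hmc
    rw [hsym, hc1, hc0]
    push_cast at hmc ⊢
    rw [hAc] at hmc
    have hne : (((m : ℚ) - r) + s) * (((n : ℚ) - s) + r) ≠ 0 := by positivity
    linear_combination ((((m : ℚ) - r) * ((n : ℚ) - s) - r * s)
      * (chooseZ B ((B : ℤ) + s - k) : ℚ)
      / ((((m : ℚ) - r) + s) * (((n : ℚ) - s) + r))) * hmc
  rw [finsum_congr key]
  -- finiteness of supports
  have hg : ∀ (C : ℕ) (u : ℤ),
      (Function.support fun k : ℤ =>
        ((chooseZ C (k - u) : ℚ) * chooseZ B ((B : ℤ) + s - k))).Finite := by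
    intro C u
    apply Set.Finite.subset (Finset.Icc u ((B : ℤ) + s)).finite_toSet
    intro k hk
    simp only [Function.mem_support] at hk
    simp only [Finset.coe_Icc, Set.mem_Icc]
    constructor
    · by_contra h
      rw [chooseZ_of_neg (show k - u < 0 by omega)] at hk; simp at hk
    · by_contra h
      rw [chooseZ_of_neg (show (B : ℤ) + s - k < 0 by omega)] at hk; simp at hk
  have hgc : ∀ (C : ℕ) (u : ℤ) (c : ℚ),
      (Function.support fun k : ℤ =>
        c * ((chooseZ C (k - u) : ℚ) * chooseZ B ((B : ℤ) + s - k))).Finite := by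
    intro C u c
    apply Set.Finite.subset (hg C u)
    intro k hk
    simp only [Function.mem_support] at hk ⊢
    exact fun h => hk (by rw [h, mul_zero])
  rw [finsum_add_distrib (hgc (A - 1) ((r : ℤ) + 1) c1) (hgc A (r : ℤ) c0),
    ← mul_finsum _ c1, ← mul_finsum _ c0,
    finsum_vdm (A - 1) B ((r : ℤ) + 1) ((B : ℤ) + s), finsum_vdm A B (r : ℤ) ((B : ℤ) + s)]
  have e1 : chooseZ (A - 1 + B) ((B : ℤ) + s - ((r : ℤ) + 1)) = (m + n - 1).choose (n - 1) := by
    have ha : (B : ℤ) + s - ((r : ℤ) + 1) = ((n - 1 : ℕ) : ℤ) := by omega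
    rw [ha, chooseZ_coe]
    congr 1
    omega
  have e0 : chooseZ (A + B) ((B : ℤ) + s - (r : ℤ)) = (m + n).choose n := by
    have ha : (B : ℤ) + s - (r : ℤ) = ((n : ℕ) : ℤ) := by omega
    rw [ha, chooseZ_coe]
    congr 1
    omega
  rw [e1, e0]
  -- binomial relations
  have f1 : (n : ℚ) * (m + n).choose n = ((m : ℚ) + n) * (m + n - 1).choose (n - 1) := by
    have h := Nat.add_one_mul_choose_eq (m + n - 1) (n - 1)
    have ha : m + n - 1 + 1 = m + n := by omega
    have hb : n - 1 + 1 = n := by omega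
    simp only [Nat.succ_eq_add_one, ha, hb] at h
    have := congrArg (fun x : ℕ => (x : ℚ)) h
    push_cast at this
    linarith [this]
  have f2 : (m + n - 1).choose (n - 1) = (m + n - 1).choose m := by
    have h := Nat.choose_symm (show n - 1 ≤ m + n - 1 by omega)
    have ha : m + n - 1 - (n - 1) = m := by omega
    rw [ha] at h
    exact h.symm
  have f3 : (m : ℚ) * (m + n - 1).choose m = ((m : ℚ) + n - 1) * (m + n - 2).choose (m - 1) := by
    have h := Nat.add_one_mul_choose_eq (m + n - 2) (m - 1)
    have ha : m + n - 2 + 1 = m + n - 1 := by omega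
    have hb : m - 1 + 1 = m := by omega
    simp only [Nat.succ_eq_add_one, ha, hb] at h
    have := congrArg (fun x : ℕ => (x : ℚ)) h
    push_cast [show (1:ℕ) ≤ m + n by omega] at this
    linarith [this]
  have hrhs : (((m + n - 1) * (m + n - 2).choose (m - 1) : ℕ) : ℚ)
      = ((m : ℚ) + n - 1) * (m + n - 2).choose (m - 1) := by
    push_cast [show (1:ℕ) ≤ m + n by omega]
    ring
  rw [hrhs, ← f3, ← f2]
  have hy : ((m + n).choose n : ℚ) = ((m : ℚ) + n) * (m + n - 1).choose (n - 1) / n := by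
    field_simp
    linarith [f1]
  rw [hy, hc1, hc0]
  have hn0 : (n : ℚ) ≠ 0 := by positivity
  field_simp
  ring
end

section
/- Setting q = 1 in Stanley's Shuffle Theorem: for disjoint permutations σ ∈ S_m, π ∈ S_n with des(σ) = r and des(π) = s, the number of shuffles α of σ and π with des(α) = k equals C(m−r+s, k−r)·C(n−s+r, k−s). -/
open Polynomial

namespace Stanley

def countAdj : List ℕ → ℕ
  | a :: b :: t => (if b < a then 1 else 0) + countAdj (b :: t)
  | _ => 0

lemma des_nil : des ([] : List ℕ) = 0 := by simp [des, desSet]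

lemma des_singleton (a : ℕ) : des [a] = 0 := by simp [des, desSet]

lemma des_cons (a b : ℕ) (t : List ℕ) :
    des (a :: b :: t) = (if b < a then 1 else 0) + des (b :: t) := by
  classical
  have hL : (a :: b :: t).length - 1 = t.length + 1 := by simp
  have h1 : Finset.Icc 1 (t.length + 1) = insert 1 (Finset.Icc 2 (t.length + 1)) := by
    ext i; simp only [Finset.mem_Icc, Finset.mem_insert]; omega
  unfold des desSet
  rw [hL, h1, Finset.filter_insert]
  have key : ((Finset.Icc 2 (t.length+1)).filter
      (fun i => (a::b::t).getD i 0 < (a::b::t).getD (i-1) 0)).card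
      = ((Finset.Icc 1 ((b::t).length - 1)).filter
      (fun i => (b::t).getD i 0 < (b::t).getD (i-1) 0)).card := by
    apply Finset.card_bij (fun i _ => i - 1)
    · intro i hi
      simp only [Finset.mem_filter, Finset.mem_Icc] at hi ⊢
      obtain ⟨⟨h2, hle⟩, hdesc⟩ := hi
      obtain ⟨k, rfl⟩ : ∃ k, i = k + 2 := ⟨i - 2, by omega⟩
      refine ⟨⟨by omega, by simp; omega⟩, ?_⟩
      simpa using hdesc
    · intro i hi j hj hij
      simp only [Finset.mem_filter, Finset.mem_Icc] at hi hj
      omega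
    · intro j hj
      simp only [Finset.mem_filter, Finset.mem_Icc] at hj
      obtain ⟨⟨h1j, hle⟩, hdesc⟩ := hj
      refine ⟨j + 1, ?_, by omega⟩
      simp only [Finset.mem_filter, Finset.mem_Icc]
      obtain ⟨k, rfl⟩ : ∃ k, j = k + 1 := ⟨j - 1, by omega⟩
      refine ⟨⟨by omega, by simp at hle ⊢; omega⟩, ?_⟩
      simpa using hdesc
  by_cases hba : b < a
  · rw [if_pos (by simpa using hba), Finset.card_insert_of_notMem (by simp), key]
    simp [hba, Nat.add_comm]
  · rw [if_neg (by simpa using hba), key]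
    simp [hba]

lemma des_eq_countAdj : ∀ l : List ℕ, des l = countAdj l
  | [] => by simp [des_nil, countAdj]
  | [a] => by simp [des_singleton, countAdj]
  | a :: b :: t => by rw [des_cons, des_eq_countAdj (b :: t)]; simp [countAdj]

lemma countAdj_le : ∀ l : List ℕ, countAdj l ≤ l.length - 1
  | [] => by simp [countAdj]
  | [a] => by simp [countAdj]
  | a :: b :: t => by
    have := countAdj_le (b :: t)
    simp only [countAdj, List.length] at this ⊢
    split <;> omega

lemma des_le (l : List ℕ) : des l ≤ l.length - 1 := by
  rw [des_eq_countAdj]; exact countAdj_le l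

/-- weak compatibility relation on (letter, value) pairs -/
def Rc (z w : ℕ × ℕ) : Prop := w.2 ≤ z.2 ∧ (w.1 < z.1 → w.2 < z.2)

/-- total order: decreasing values, increasing letters on ties -/
def Rle (z w : ℕ × ℕ) : Prop := w.2 < z.2 ∨ (z.2 = w.2 ∧ z.1 ≤ w.1)

/-- strict version -/
def Rs (z w : ℕ × ℕ) : Prop := w.2 < z.2 ∨ (z.2 = w.2 ∧ z.1 < w.1)

instance : DecidableRel Rle := fun z w => by unfold Rle; infer_instance

instance : IsTotal (ℕ × ℕ) Rle := ⟨by intro a b; unfold Rle; omega⟩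
instance : IsTrans (ℕ × ℕ) Rle := ⟨by intro a b c; unfold Rle; omega⟩
instance : IsAntisymm (ℕ × ℕ) Rle := ⟨by
  intro a b h1 h2; unfold Rle at h1 h2
  have : a.1 = b.1 ∧ a.2 = b.2 := by omega
  exact Prod.ext this.1 this.2⟩
instance : IsTrans (ℕ × ℕ) Rs := ⟨by intro a b c; unfold Rs; omega⟩

def CompatF : List ℕ → ℕ → Finset (List ℕ)
  | [], _ => {([] : List ℕ)}
  | [_], P => (Finset.range (P+1)).image (fun v => [v])
  | a :: b :: t, P => (Finset.range (P+1)).biUnion (fun v =>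
      ((if b < a then (if v = 0 then (∅ : Finset (List ℕ)) else CompatF (b :: t) (v-1))
        else CompatF (b :: t) v)).image (fun g => v :: g))

lemma mem_compatF : ∀ (α : List ℕ) (P : ℕ) (g : List ℕ),
    g ∈ CompatF α P ↔
      g.length = α.length ∧ List.Chain' Rc (α.zip g) ∧ g.headI ≤ P
  | [], P, g => by
    simp only [CompatF, Finset.mem_singleton]
    constructor
    · rintro rfl; simp; exact List.IsChain.nil
    · rintro ⟨h, -, -⟩; exact List.eq_nil_of_length_eq_zero h
  | [a], P, g => by
    simp only [CompatF, Finset.mem_image, Finset.mem_range]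
    constructor
    · rintro ⟨v, hv, rfl⟩; refine ⟨by simp, List.IsChain.singleton _, by simpa using Nat.lt_succ_iff.mp hv⟩
    · rintro ⟨hlen, -, hhead⟩
      obtain ⟨v, rfl⟩ : ∃ v, g = [v] := by
        cases g with
        | nil => simp at hlen
        | cons x t => cases t with
          | nil => exact ⟨x, rfl⟩
          | cons y u => simp at hlen
      exact ⟨v, by simpa using Nat.lt_succ_of_le (by simpa using hhead), rfl⟩
  | a :: b :: t, P, g => by
    simp only [CompatF, Finset.mem_biUnion, Finset.mem_range, Finset.mem_image]
    constructor
    · rintro ⟨v, hv, g', hg', rfl⟩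
      have hv' : v ≤ P := Nat.lt_succ_iff.mp hv
      by_cases hba : b < a
      · rw [if_pos hba] at hg'
        by_cases hv0 : v = 0
        · rw [if_pos hv0] at hg'; simp at hg'
        · rw [if_neg hv0] at hg'
          obtain ⟨hlen, hchain, hhead⟩ := (mem_compatF (b :: t) (v-1) g').mp hg'
          obtain ⟨w, g'', rfl⟩ : ∃ w g'', g' = w :: g'' := by
            cases g' with
            | nil => simp at hlen
            | cons w g'' => exact ⟨w, g'', rfl⟩
          refine ⟨by simpa using hlen, ?_, by simpa using hv'⟩
          simp only [List.zip_cons_cons, List.Chain', List.isChain_cons_cons]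
          refine ⟨⟨by simp at hhead ⊢; omega, fun _ => by simp at hhead ⊢; omega⟩, hchain⟩
      · rw [if_neg hba] at hg'
        obtain ⟨hlen, hchain, hhead⟩ := (mem_compatF (b :: t) v g').mp hg'
        obtain ⟨w, g'', rfl⟩ : ∃ w g'', g' = w :: g'' := by
          cases g' with
          | nil => simp at hlen
          | cons w g'' => exact ⟨w, g'', rfl⟩
        refine ⟨by simpa using hlen, ?_, by simpa using hv'⟩
        simp only [List.zip_cons_cons, List.Chain', List.isChain_cons_cons]
        exact ⟨⟨by simpa using hhead, fun h => absurd h hba⟩, hchain⟩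
    · rintro ⟨hlen, hchain, hhead⟩
      obtain ⟨v, w, g'', rfl⟩ : ∃ v w g'', g = v :: w :: g'' := by
        cases g with
        | nil => simp at hlen
        | cons v gt => cases gt with
          | nil => simp at hlen
          | cons w g'' => exact ⟨v, w, g'', rfl⟩
      simp only [List.zip_cons_cons, List.Chain', List.isChain_cons_cons] at hchain
      obtain ⟨⟨hwv, hstrict⟩, hchain'⟩ := hchain
      simp only [List.headI] at hhead
      refine ⟨v, Nat.lt_succ_of_le hhead, w :: g'', ?_, rfl⟩
      by_cases hba : b < a
      · have hwv' : w < v := hstrict hba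
        rw [if_pos hba, if_neg (by omega)]
        exact (mem_compatF (b :: t) (v-1) (w :: g'')).mpr
          ⟨by simpa using hlen, hchain', by simp; omega⟩
      · rw [if_neg hba]
        exact (mem_compatF (b :: t) v (w :: g'')).mpr
          ⟨by simpa using hlen, hchain', by simpa using hwv⟩

lemma sum_choose_shift (L d : ℕ) (hd : d ≤ L) :
    ∀ Q, ∑ u ∈ Finset.range Q, Nat.choose (L + u - d) L = Nat.choose (L + Q - d) (L + 1)
  | 0 => by
    simp [Nat.choose_eq_zero_of_lt (show L - d < L + 1 by omega)]
  | Q + 1 => by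
    rw [Finset.sum_range_succ, sum_choose_shift L d hd Q]
    by_cases hQ : Q < d
    · rw [Nat.choose_eq_zero_of_lt (show L + Q - d < L + 1 by omega),
        Nat.choose_eq_zero_of_lt (show L + Q - d < L by omega),
        Nat.choose_eq_zero_of_lt (show L + (Q+1) - d < L + 1 by omega)]
    · push_neg at hQ
      have h1 : L + Q - d = L + (Q - d) := by omega
      have h2 : L + (Q + 1) - d = (L + (Q - d)) + 1 := by omega
      rw [h1, h2, Nat.choose_succ_succ' (L + (Q - d)) L]
      omega

lemma card_compatF : ∀ (α : List ℕ) (P : ℕ),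
    (CompatF α P).card = Nat.choose (α.length + P - countAdj α) α.length
  | [], P => by simp [CompatF, countAdj]
  | [a], P => by
    rw [CompatF, Finset.card_image_of_injective _ (fun x y h => by simpa using h)]
    simp [countAdj]
    omega
  | a :: b :: t, P => by
    have hd := countAdj_le (b :: t)
    simp only [List.length_cons] at hd
    rw [CompatF, Finset.card_biUnion]
    · have hinner : ∀ v, ((if b < a then
          (if v = 0 then (∅ : Finset (List ℕ)) else CompatF (b :: t) (v-1))
          else CompatF (b :: t) v).image (fun g => v :: g)).card
          = (if b < a then (if v = 0 then 0 else Nat.choose ((b::t).length + (v-1) - countAdj (b::t)) (b::t).length)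
            else Nat.choose ((b::t).length + v - countAdj (b::t)) (b::t).length) := by
        intro v
        rw [Finset.card_image_of_injective _ (fun x y h => by simpa using h)]
        split
        · split
          · simp
          · rw [card_compatF]
        · rw [card_compatF]
      rw [Finset.sum_congr rfl (fun v _ => hinner v)]
      have hdL : countAdj (b :: t) ≤ (b :: t).length := le_trans (countAdj_le _) (by simp)
      by_cases hba : b < a
      · simp only [if_pos hba]
        rw [Finset.sum_range_succ']
        have hf : ∀ k, (if k + 1 = 0 then 0 else
            Nat.choose ((b::t).length + (k+1-1) - countAdj (b::t)) (b::t).length)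
            = Nat.choose ((b::t).length + k - countAdj (b::t)) (b::t).length := by
          intro k; simp
        rw [Finset.sum_congr rfl (fun k _ => hf k), if_pos rfl,
          sum_choose_shift (b::t).length (countAdj (b::t)) hdL P]
        have hca : countAdj (a :: b :: t) = 1 + countAdj (b :: t) := by
          simp [countAdj, hba]
        rw [hca]
        have h1 : (a :: b :: t).length + P - (1 + countAdj (b :: t))
            = (b::t).length + P - countAdj (b :: t) := by
          simp only [List.length_cons] at hdL ⊢; omega
        have h2 : (a :: b :: t).length = (b::t).length + 1 := by simp
        rw [h1, h2]
        omega
      · simp only [if_neg hba]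
        rw [sum_choose_shift (b::t).length (countAdj (b::t)) hdL (P+1)]
        have hca : countAdj (a :: b :: t) = countAdj (b :: t) := by
          simp [countAdj, hba]
        rw [hca]
        have h1 : (a :: b :: t).length + P - countAdj (b :: t)
            = (b::t).length + (P+1) - countAdj (b :: t) := by
          simp only [List.length_cons] at hdL ⊢; omega
        have h2 : (a :: b :: t).length = (b::t).length + 1 := by simp
        rw [h1, h2]
    · intro x _ y _ hxy
      simp only [Finset.disjoint_left, Finset.mem_image]
      rintro g ⟨g1, -, rfl⟩ ⟨g2, -, heq⟩
      injection heq with h1 _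
      exact hxy h1.symm

lemma compatF_all_le : ∀ (α : List ℕ) (P : ℕ) (g : List ℕ), g ∈ CompatF α P →
    ∀ x ∈ g, x ≤ P
  | [], P, g => by simp only [CompatF, Finset.mem_singleton]; rintro rfl; simp
  | [a], P, g => by
    simp only [CompatF, Finset.mem_image, Finset.mem_range]
    rintro ⟨v, hv, rfl⟩ x hx
    simp at hx; omega
  | a :: b :: t, P, g => by
    simp only [CompatF, Finset.mem_biUnion, Finset.mem_range, Finset.mem_image]
    rintro ⟨v, hv, g', hg', rfl⟩ x hx
    rcases List.mem_cons.mp hx with rfl | hx'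
    · omega
    · split_ifs at hg' with h1 h2
      · simp at hg'
      · exact le_trans (compatF_all_le (b :: t) (v-1) g' hg' x hx') (by omega)
      · exact le_trans (compatF_all_le (b :: t) v g' hg' x hx') (by omega)


local infixl:50 " ~ " => List.Perm
local infixl:50 " <+ " => List.Sublist

lemma headI_le {p : ℕ} : ∀ {l : List ℕ}, (∀ x ∈ l, x ≤ p) → l.headI ≤ p
  | [], _ => by simp
  | x :: t, h => h x List.mem_cons_self

lemma chain'_and {A : Type*} {R S : A → A → Prop} {l : List A} (hR : List.Chain' R l)
    (hS : List.Chain' S l) : List.Chain' (fun a b => R a b ∧ S a b) l := by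
  simp only [List.Chain', List.isChain_iff_getElem] at *
  exact fun i h => ⟨hR i h, hS i h⟩

lemma map_fst_filter (q : ℕ → Bool) : ∀ ζ : List (ℕ × ℕ),
    (ζ.filter (fun z => q z.1)).map Prod.fst = (ζ.map Prod.fst).filter q
  | [] => rfl
  | z :: ζ => by
    simp only [List.filter_cons, List.map_cons]
    by_cases h : q z.1
    · simp [h, map_fst_filter q ζ]
    · simp [h, map_fst_filter q ζ]

lemma zip_map_fst_snd {A B : Type*} (l : List (A × B)) :
    (l.map Prod.fst).zip (l.map Prod.snd) = l := by
  have := List.zip_unzip l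
  rwa [List.unzip_eq_map] at this

lemma chain_rc_iff_sorted {ζ : List (ℕ × ℕ)} (h : (ζ.map Prod.fst).Nodup) :
    List.Chain' Rc ζ ↔ List.Pairwise Rle ζ := by
  have hne : List.Pairwise (fun z w : ℕ × ℕ => z.1 ≠ w.1) ζ := List.pairwise_map.mp h
  constructor
  · intro hc
    have hs : List.Chain' Rs ζ := by
      refine (chain'_and hc hne.isChain).imp ?_
      rintro ⟨x1, x2⟩ ⟨y1, y2⟩ ⟨hrc, hneq⟩
      simp only [Rc, Rs] at *
      omega
    exact (List.isChain_iff_pairwise.mp hs).imp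
      (by rintro ⟨x1, x2⟩ ⟨y1, y2⟩ hh; simp only [Rs, Rle] at *; omega)
  · intro hs
    refine List.Pairwise.isChain ?_
    refine (List.Pairwise.and hs hne).imp ?_
    rintro ⟨x1, x2⟩ ⟨y1, y2⟩ ⟨hle, hneq⟩
    simp only [Rle, Rc] at *
    omega

noncomputable def shuffles (σ π : List ℕ) : Finset (List ℕ) :=
  @Finset.filter _ (IsShuffle σ π) (Classical.decPred _) (σ ++ π).permutations.toFinset

lemma perm_of_isShuffle {σ π : List ℕ} (hσπ : (σ ++ π).Nodup) {α} (h : IsShuffle σ π α) :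
    α ~ σ ++ π := by
  obtain ⟨hnd, hs, hp, hlen⟩ := h
  have hsub : (σ ++ π) ⊆ α := by
    intro x hx
    rcases List.mem_append.mp hx with hx | hx
    · exact hs.subset hx
    · exact hp.subset hx
  exact ((hσπ.subperm hsub).perm_of_length_le (by simp [hlen])).symm

lemma mem_shuffles {σ π : List ℕ} (hσπ : (σ ++ π).Nodup) {α} :
    α ∈ shuffles σ π ↔ IsShuffle σ π α := by
  simp only [shuffles, Finset.mem_filter, List.mem_toFinset, List.mem_permutations]
  exact ⟨fun h => h.2, fun h => ⟨perm_of_isShuffle hσπ h, h⟩⟩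

lemma filter_mem_eq {τ α : List ℕ} (hsub : τ <+ α) (hα : α.Nodup) :
    α.filter (fun x => decide (x ∈ τ)) = τ := by
  have h1 : τ.filter (fun x => decide (x ∈ τ)) = τ := List.filter_eq_self.mpr (by simp)
  have h2 : τ <+ α.filter (fun x => decide (x ∈ τ)) := by
    conv_lhs => rw [← h1]
    exact hsub.filter _
  have h3 : (α.filter (fun x => decide (x ∈ τ))).Nodup := hα.filter _
  have h4 : (α.filter (fun x => decide (x ∈ τ))) ⊆ τ := fun x hx => by
    simpa using (List.mem_filter.mp hx).2
  have hlen : τ.length = (α.filter (fun x => decide (x ∈ τ))).length :=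
    le_antisymm h2.length_le ((h3.subperm h4).length_le)
  exact (h2.eq_of_length hlen).symm

lemma filter_zip_fst {τ α g : List ℕ} (hsub : τ <+ α) (hα : α.Nodup)
    (hlen : g.length = α.length) :
    ((α.zip g).filter (fun z => decide (z.1 ∈ τ))).map Prod.fst = τ := by
  rw [map_fst_filter (fun x => decide (x ∈ τ)), List.map_fst_zip (le_of_eq hlen.symm),
    filter_mem_eq hsub hα]

lemma filter_zip_eq_zip {τ α g : List ℕ} (hsub : τ <+ α) (hα : α.Nodup)
    (hlen : g.length = α.length) :
    (α.zip g).filter (fun z => decide (z.1 ∈ τ))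
      = τ.zip (((α.zip g).filter (fun z => decide (z.1 ∈ τ))).map Prod.snd) := by
  conv_lhs => rw [← zip_map_fst_snd ((α.zip g).filter (fun z => decide (z.1 ∈ τ)))]
  rw [filter_zip_fst hsub hα hlen]

lemma restrict_mem_compatF {τ α g : List ℕ} {p : ℕ} (hsub : τ <+ α) (hα : α.Nodup)
    (hτ : τ.Nodup) (hg : g ∈ CompatF α p) :
    ((α.zip g).filter (fun z => decide (z.1 ∈ τ))).map Prod.snd ∈ CompatF τ p := by
  obtain ⟨hlen, hchain, hhead⟩ := (mem_compatF α p g).mp hg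
  have hfst : ((α.zip g).filter (fun z => decide (z.1 ∈ τ))).map Prod.fst = τ :=
    filter_zip_fst hsub hα hlen
  have hζfst : (α.zip g).map Prod.fst = α := List.map_fst_zip (le_of_eq hlen.symm)
  have hsorted : List.Pairwise Rle (α.zip g) :=
    (chain_rc_iff_sorted (by rw [hζfst]; exact hα)).mp hchain
  have hξsorted : List.Pairwise Rle ((α.zip g).filter (fun z => decide (z.1 ∈ τ))) :=
    List.Pairwise.sublist List.filter_sublist hsorted
  apply (mem_compatF τ p _).mpr
  refine ⟨?_, ?_, ?_⟩
  · have := congrArg List.length hfst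
    simpa using this
  · rw [← filter_zip_eq_zip hsub hα hlen]
    exact (chain_rc_iff_sorted (by rw [hfst]; exact hτ)).mpr hξsorted
  · apply headI_le
    intro x hx
    have hsubg : ((α.zip g).filter (fun z => decide (z.1 ∈ τ))).map Prod.snd <+ g := by
      have := (List.filter_sublist (l := α.zip g) (p := fun z => decide (z.1 ∈ τ))).map Prod.snd
      rwa [List.map_snd_zip (le_of_eq hlen)] at this
    exact compatF_all_le α p g hg x (hsubg.subset hx)

lemma zip_perm_parts {σ π α g : List ℕ} (hdisj : σ.Disjoint π) (hperm : α ~ σ ++ π) :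
    α.zip g ~ ((α.zip g).filter (fun z => decide (z.1 ∈ σ)))
      ++ ((α.zip g).filter (fun z => decide (z.1 ∈ π))) := by
  have hcongr : (α.zip g).filter (fun z => !(decide (z.1 ∈ σ)))
      = (α.zip g).filter (fun z => decide (z.1 ∈ π)) := by
    apply List.filter_congr
    intro z hz
    have hz1 : z.1 ∈ α := by
      obtain ⟨z1, z2⟩ := z
      exact (List.of_mem_zip hz).1
    have hz2 : z.1 ∈ σ ++ π := hperm.subset hz1
    rcases List.mem_append.mp hz2 with hzσ | hzπ
    · have hnπ : z.1 ∉ π := hdisj hzσ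
      simp [hzσ, hnπ]
    · have : z.1 ∉ σ := fun hzσ => (hdisj hzσ) hzπ
      simp [this, hzπ]
  have := List.filter_append_perm (fun z => decide (z.1 ∈ σ)) (α.zip g)
  rw [hcongr] at this
  exact this.symm

lemma sigma_card_eq_prod {σ π : List ℕ} (hσ : σ.Nodup) (hπ : π.Nodup)
    (hdisj : σ.Disjoint π) (p : ℕ) :
    ((shuffles σ π).sigma (fun α => CompatF α p)).card
      = ((CompatF σ p) ×ˢ (CompatF π p)).card := by
  have hσπ : (σ ++ π).Nodup := hσ.append hπ hdisj
  apply Finset.card_bij (fun (x : Σ _ : List ℕ, List ℕ) _ =>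
    (((x.1.zip x.2).filter (fun z => decide (z.1 ∈ σ))).map Prod.snd,
     ((x.1.zip x.2).filter (fun z => decide (z.1 ∈ π))).map Prod.snd))
  · rintro ⟨α, g⟩ hmem
    rw [Finset.mem_sigma] at hmem
    obtain ⟨hαs, hgc⟩ := hmem
    have hsh := (mem_shuffles hσπ).mp hαs
    rw [Finset.mem_product]
    exact ⟨restrict_mem_compatF hsh.2.1 hsh.1 hσ hgc,
      restrict_mem_compatF hsh.2.2.1 hsh.1 hπ hgc⟩
  · rintro ⟨α₁, g₁⟩ h₁ ⟨α₂, g₂⟩ h₂ heq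
    rw [Finset.mem_sigma] at h₁ h₂
    obtain ⟨hα₁, hg₁⟩ := h₁
    obtain ⟨hα₂, hg₂⟩ := h₂
    have hsh₁ := (mem_shuffles hσπ).mp hα₁
    have hsh₂ := (mem_shuffles hσπ).mp hα₂
    have hperm₁ : α₁ ~ σ ++ π := perm_of_isShuffle hσπ hsh₁
    have hperm₂ : α₂ ~ σ ++ π := perm_of_isShuffle hσπ hsh₂
    obtain ⟨hlen₁, hchain₁, -⟩ := (mem_compatF α₁ p g₁).mp hg₁
    obtain ⟨hlen₂, hchain₂, -⟩ := (mem_compatF α₂ p g₂).mp hg₂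
    have hs₁ : List.Pairwise Rle (α₁.zip g₁) := by
      apply (chain_rc_iff_sorted ?_).mp hchain₁
      rw [List.map_fst_zip (le_of_eq hlen₁.symm)]
      exact hsh₁.1
    have hs₂ : List.Pairwise Rle (α₂.zip g₂) := by
      apply (chain_rc_iff_sorted ?_).mp hchain₂
      rw [List.map_fst_zip (le_of_eq hlen₂.symm)]
      exact hsh₂.1
    have e1 := filter_zip_eq_zip hsh₁.2.1 hsh₁.1 hlen₁
    have e1' := filter_zip_eq_zip hsh₁.2.2.1 hsh₁.1 hlen₁
    have e2 := filter_zip_eq_zip hsh₂.2.1 hsh₂.1 hlen₂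
    have e2' := filter_zip_eq_zip hsh₂.2.2.1 hsh₂.1 hlen₂
    have hfeq := congrArg Prod.fst heq
    have hgeq := congrArg Prod.snd heq
    simp only at hfeq hgeq
    have hζ : α₁.zip g₁ = α₂.zip g₂ := by
      apply List.Perm.eq_of_pairwise' hs₁ hs₂
      have hmid : ((α₁.zip g₁).filter (fun z => decide (z.1 ∈ σ)))
            ++ ((α₁.zip g₁).filter (fun z => decide (z.1 ∈ π)))
          = ((α₂.zip g₂).filter (fun z => decide (z.1 ∈ σ)))
            ++ ((α₂.zip g₂).filter (fun z => decide (z.1 ∈ π))) := by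
        rw [e1, e1', e2, e2', hfeq, hgeq]
      have hp1 := zip_perm_parts (g := g₁) hdisj hperm₁
      rw [hmid] at hp1
      exact hp1.trans (zip_perm_parts hdisj hperm₂).symm
    have hα : α₁ = α₂ := by
      have := congrArg (List.map Prod.fst) hζ
      rwa [List.map_fst_zip (le_of_eq hlen₁.symm),
        List.map_fst_zip (le_of_eq hlen₂.symm)] at this
    have hg : g₁ = g₂ := by
      have := congrArg (List.map Prod.snd) hζ
      rwa [List.map_snd_zip (le_of_eq hlen₁),
        List.map_snd_zip (le_of_eq hlen₂)] at this
    subst hα; subst hg; rfl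
  · rintro ⟨f, g⟩ hfg
    rw [Finset.mem_product] at hfg
    obtain ⟨hf, hg⟩ := hfg
    obtain ⟨hflen, hfchain, -⟩ := (mem_compatF σ p f).mp hf
    obtain ⟨hglen, hgchain, -⟩ := (mem_compatF π p g).mp hg
    set base := σ.zip f ++ π.zip g with hbase
    set ζ := base.mergeSort (fun z w => decide (Rle z w)) with hζdef
    have hperm : ζ ~ base := List.mergeSort_perm base _
    have hsortedζ : List.Pairwise Rle ζ := by
      have htr : ∀ a b c : ℕ × ℕ, decide (Rle a b) = true → decide (Rle b c) = true →
          decide (Rle a c) = true := by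
        intro a b c h1 h2
        exact decide_eq_true (Trans.trans (of_decide_eq_true h1) (of_decide_eq_true h2))
      have hto : ∀ a b : ℕ × ℕ, (decide (Rle a b) || decide (Rle b a)) = true := by
        intro a b
        rcases total_of Rle a b with h | h
        · simp [h]
        · simp [h]
      have := List.pairwise_mergeSort htr hto base
      exact this.imp (fun h => of_decide_eq_true h)
    have hbfst : base.map Prod.fst = σ ++ π := by
      rw [hbase, List.map_append, List.map_fst_zip (le_of_eq hflen.symm),
        List.map_fst_zip (le_of_eq hglen.symm)]
    have hfstζ : ζ.map Prod.fst ~ σ ++ π := by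
      rw [← hbfst]; exact hperm.map Prod.fst
    have hαnodup : (ζ.map Prod.fst).Nodup := hfstζ.nodup_iff.mpr hσπ
    have hzipαh : (ζ.map Prod.fst).zip (ζ.map Prod.snd) = ζ := zip_map_fst_snd ζ
    have hsortσ : List.Pairwise Rle (σ.zip f) := by
      apply (chain_rc_iff_sorted ?_).mp hfchain
      rw [List.map_fst_zip (le_of_eq hflen.symm)]
      exact hσ
    have hsortπ : List.Pairwise Rle (π.zip g) := by
      apply (chain_rc_iff_sorted ?_).mp hgchain
      rw [List.map_fst_zip (le_of_eq hglen.symm)]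
      exact hπ
    have hsubσ : σ.zip f <+ ζ := by
      apply List.sublist_of_subperm_of_pairwise ?_ hsortσ hsortedζ
      exact (List.sublist_append_left _ _).subperm.trans hperm.symm.subperm
    have hsubπ : π.zip g <+ ζ := by
      apply List.sublist_of_subperm_of_pairwise ?_ hsortπ hsortedζ
      exact (List.sublist_append_right _ _).subperm.trans hperm.symm.subperm
    have hσα : σ <+ ζ.map Prod.fst := by
      have := hsubσ.map Prod.fst
      rwa [List.map_fst_zip (le_of_eq hflen.symm)] at this
    have hπα : π <+ ζ.map Prod.fst := by
      have := hsubπ.map Prod.fst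
      rwa [List.map_fst_zip (le_of_eq hglen.symm)] at this
    have hlenα : (ζ.map Prod.fst).length = σ.length + π.length := by
      have := hfstζ.length_eq
      simpa using this
    have hsh : IsShuffle σ π (ζ.map Prod.fst) := ⟨hαnodup, hσα, hπα, hlenα⟩
    have hsndperm : ζ.map Prod.snd ~ f ++ g := by
      have := hperm.map Prod.snd
      rwa [hbase, List.map_append, List.map_snd_zip (le_of_eq hflen),
        List.map_snd_zip (le_of_eq hglen)] at this
    have hres : ∀ (τ h' : List ℕ), τ.zip h' <+ ζ → τ.length = h'.length →
        ((∀ z : ℕ × ℕ, z ∈ τ.zip h' → z.1 ∈ τ)) →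
        τ <+ ζ.map Prod.fst → τ.Nodup →
        ζ.filter (fun z => decide (z.1 ∈ τ)) = τ.zip h' := by
      intro τ h' hsub hlen hmem hτα hτnd
      have hall : τ.zip h' = (τ.zip h').filter (fun z => decide (z.1 ∈ τ)) :=
        (List.filter_eq_self.mpr (fun z hz => decide_eq_true (hmem z hz))).symm
      have hsubf : τ.zip h' <+ ζ.filter (fun z => decide (z.1 ∈ τ)) := by
        conv_lhs => rw [hall]
        exact hsub.filter _
      have hlenf : (τ.zip h').length = (ζ.filter (fun z => decide (z.1 ∈ τ))).length := by
        have h5 : ((ζ.filter (fun z => decide (z.1 ∈ τ))).map Prod.fst).length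
            = τ.length := by
          rw [map_fst_filter (fun x => decide (x ∈ τ)), filter_mem_eq hτα hαnodup]
        simp only [List.length_map] at h5
        rw [h5, List.length_zip, hlen, min_self]
      exact (hsubf.eq_of_length hlenf).symm
    have hresσ : ζ.filter (fun z => decide (z.1 ∈ σ)) = σ.zip f := by
      apply hres σ f hsubσ hflen.symm ?_ hσα hσ
      intro z hz
      obtain ⟨z1, z2⟩ := z
      exact (List.of_mem_zip hz).1
    have hresπ : ζ.filter (fun z => decide (z.1 ∈ π)) = π.zip g := by
      apply hres π g hsubπ hglen.symm ?_ hπα hπ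
      intro z hz
      obtain ⟨z1, z2⟩ := z
      exact (List.of_mem_zip hz).1
    refine ⟨⟨ζ.map Prod.fst, ζ.map Prod.snd⟩, ?_, ?_⟩
    · rw [Finset.mem_sigma]
      refine ⟨(mem_shuffles hσπ).mpr hsh, ?_⟩
      apply (mem_compatF _ p _).mpr
      refine ⟨by simp, ?_, ?_⟩
      · rw [hzipαh]
        exact (chain_rc_iff_sorted hαnodup).mpr hsortedζ
      · apply headI_le
        intro x hx
        rcases List.mem_append.mp (hsndperm.subset hx) with hx' | hx'
        · exact compatF_all_le σ p f hf x hx'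
        · exact compatF_all_le π p g hg x hx'
    · simp only [hzipαh, hresσ, hresπ]
      rw [List.map_snd_zip (le_of_eq hflen),
        List.map_snd_zip (le_of_eq hglen)]

lemma chooseZ_neg {a : ℕ} {b : ℤ} (h : b < 0) : chooseZ a b = 0 := by
  simp [chooseZ, not_le.mpr h]

lemma chooseZ_of_nonneg {a : ℕ} {b : ℤ} (h : 0 ≤ b) : chooseZ a b = a.choose b.toNat := by
  simp [chooseZ, h]

lemma chooseZ_coe (a c : ℕ) : chooseZ a (c : ℤ) = a.choose c := by
  simp [chooseZ]

lemma chooseZ_zero_right (a : ℕ) : chooseZ a 0 = 1 := by simp [chooseZ]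

lemma chooseZ_eq_zero_of_gt {a : ℕ} {b : ℤ} (h : (a : ℤ) < b) : chooseZ a b = 0 := by
  rw [chooseZ_of_nonneg (by omega)]
  exact Nat.choose_eq_zero_of_lt (by omega)

lemma chooseZ_zero_left {c : ℤ} (h : c ≠ 0) : chooseZ 0 c = 0 := by
  rcases lt_or_gt_of_ne h with h' | h'
  · exact chooseZ_neg h'
  · exact chooseZ_eq_zero_of_gt (by omega)

lemma chooseZ_pascal (a : ℕ) (b : ℤ) :
    chooseZ (a + 1) b = chooseZ a b + chooseZ a (b - 1) := by
  rcases lt_trichotomy b 0 with h | h | h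
  · rw [chooseZ_neg h, chooseZ_neg h, chooseZ_neg (by omega)]
  · subst h
    rw [chooseZ_zero_right, chooseZ_zero_right, chooseZ_neg (by omega)]
  · obtain ⟨c, rfl⟩ : ∃ c : ℕ, b = (c : ℤ) + 1 := ⟨(b - 1).toNat, by omega⟩
    have h1 : ((c : ℤ) + 1) = ((c + 1 : ℕ) : ℤ) := by push_cast; ring
    have h2 : ((c : ℤ) + 1 - 1) = ((c : ℕ) : ℤ) := by push_cast; ring
    rw [h2, h1, chooseZ_coe, chooseZ_coe, chooseZ_coe]
    exact (Nat.choose_succ_succ a c).trans (Nat.add_comm _ _)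

def SS (x y A B : ℕ) : ℕ :=
  ∑ j ∈ Finset.range (A + 1),
    Nat.choose (x + y + j) j * chooseZ x ((A : ℤ) - j) * chooseZ y ((B : ℤ) - j)

lemma SS_base_y (x A B : ℕ) : SS x 0 A B = Nat.choose (x + B) A * Nat.choose A B := by
  unfold SS
  by_cases hBA : B ≤ A
  · rw [Finset.sum_eq_single_of_mem B (Finset.mem_range.mpr (by omega))]
    · have h1 : ((B : ℤ) - B) = 0 := by ring
      rw [h1, chooseZ_zero_right, mul_one]
      have h2 : ((A : ℤ) - B) = ((A - B : ℕ) : ℤ) := by omega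
      rw [h2, chooseZ_coe]
      by_cases hAx : A ≤ x + B
      · have := Nat.choose_mul (n := x + B) (k := A) (s := B) hBA
        rw [this]
        have h3 : x + B - B = x := by omega
        rw [h3]
        ring
      · have hx : x.choose (A - B) = 0 := Nat.choose_eq_zero_of_lt (by omega)
        have hx2 : (x + B).choose A = 0 := Nat.choose_eq_zero_of_lt (by omega)
        rw [hx, hx2, mul_zero, zero_mul]
    · intro j hj hne
      have h0 : chooseZ 0 ((B : ℤ) - j) = 0 := chooseZ_zero_left (by omega)
      rw [h0, mul_zero]
  · have h0 : A.choose B = 0 := Nat.choose_eq_zero_of_lt (by omega)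
    rw [h0, mul_zero]
    apply Finset.sum_eq_zero
    intro j hj
    rw [Finset.mem_range] at hj
    have h0' : chooseZ 0 ((B : ℤ) - j) = 0 := chooseZ_zero_left (by omega)
    rw [h0', mul_zero]

lemma SS_base_B (x y A : ℕ) : SS x y A 0 = Nat.choose x A * Nat.choose (y + A) 0 := by
  unfold SS
  rw [Finset.sum_eq_single_of_mem 0 (Finset.mem_range.mpr (by omega))]
  · norm_num [chooseZ_coe, chooseZ_zero_right]
  · intro j hj hne
    have h0 : chooseZ y (((0 : ℕ) : ℤ) - j) = 0 := chooseZ_neg (by omega)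
    rw [h0, mul_zero]

lemma SS_base_A (x y B : ℕ) : SS x y 0 B = Nat.choose (x + B) 0 * Nat.choose y B := by
  unfold SS
  rw [Finset.sum_range_one]
  norm_num [chooseZ_zero_right, chooseZ_coe]

lemma SS_rec (x Y A B : ℕ) :
    SS x (Y + 1) (A + 1) (B + 1)
      = SS x (Y + 1) A B + SS x Y (A + 1) (B + 1) + SS x Y (A + 1) B := by
  have split1 : SS x (Y + 1) (A + 1) (B + 1)
      = (∑ j ∈ Finset.range (A + 2),
          Nat.choose (x + Y + j) j * chooseZ x ((A : ℤ) + 1 - j) * chooseZ (Y + 1) ((B : ℤ) + 1 - j))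
        + (∑ j ∈ Finset.range (A + 2),
          (if j = 0 then 0 else Nat.choose (x + Y + j) (j - 1))
            * chooseZ x ((A : ℤ) + 1 - j) * chooseZ (Y + 1) ((B : ℤ) + 1 - j)) := by
    unfold SS
    rw [← Finset.sum_add_distrib]
    apply Finset.sum_congr (by norm_num)
    intro j hj
    have hw : Nat.choose (x + (Y + 1) + j) j
        = Nat.choose (x + Y + j) j + (if j = 0 then 0 else Nat.choose (x + Y + j) (j - 1)) := by
      cases j with
      | zero => simp
      | succ i =>
        have h1 : x + (Y + 1) + (i + 1) = (x + Y + (i + 1)) + 1 := by omega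
        rw [h1, Nat.choose_succ_succ (x + Y + (i + 1)) i]
        simp [Nat.add_comm]
    have hc1 : ((A + 1 : ℕ) : ℤ) - j = (A : ℤ) + 1 - j := by push_cast; ring
    have hc2 : ((B + 1 : ℕ) : ℤ) - j = (B : ℤ) + 1 - j := by push_cast; ring
    rw [hc1, hc2, hw]
    ring
  have part2 : (∑ j ∈ Finset.range (A + 2),
      (if j = 0 then 0 else Nat.choose (x + Y + j) (j - 1))
        * chooseZ x ((A : ℤ) + 1 - j) * chooseZ (Y + 1) ((B : ℤ) + 1 - j))
      = SS x (Y + 1) A B := by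
    rw [Finset.sum_range_succ']
    simp only [if_true, reduceIte, zero_mul, add_zero]
    unfold SS
    apply Finset.sum_congr rfl
    intro i hi
    have h1 : (i + 1 : ℕ) ≠ 0 := by omega
    rw [if_neg h1]
    clear h1
    have h2 : x + Y + (i + 1) = x + (Y + 1) + i := by omega
    have h3 : (i + 1 : ℕ) - 1 = i := by omega
    have h4 : (A : ℤ) + 1 - (i + 1 : ℕ) = (A : ℤ) - i := by push_cast; ring
    have h5 : (B : ℤ) + 1 - (i + 1 : ℕ) = (B : ℤ) - i := by push_cast; ring
    rw [h2, h3, h4, h5]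
  have part1 : (∑ j ∈ Finset.range (A + 2),
      Nat.choose (x + Y + j) j * chooseZ x ((A : ℤ) + 1 - j) * chooseZ (Y + 1) ((B : ℤ) + 1 - j))
      = SS x Y (A + 1) (B + 1) + SS x Y (A + 1) B := by
    unfold SS
    rw [← Finset.sum_add_distrib]
    apply Finset.sum_congr (by norm_num)
    intro j hj
    have hp : chooseZ (Y + 1) ((B : ℤ) + 1 - j)
        = chooseZ Y ((B : ℤ) + 1 - j) + chooseZ Y ((B : ℤ) - j) := by
      rw [chooseZ_pascal]
      congr 1
      ring_nf
    have hc1 : ((A + 1 : ℕ) : ℤ) - j = (A : ℤ) + 1 - j := by push_cast; ring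
    have hc2 : ((B + 1 : ℕ) : ℤ) - j = (B : ℤ) + 1 - j := by push_cast; ring
    rw [hc1, hc2, hp]
    ring
  rw [split1, part1, part2]
  ring

lemma SS_eq : ∀ y B x A, SS x y A B = Nat.choose (x + B) A * Nat.choose (y + A) B := by
  intro y
  induction y with
  | zero => intro B x A; rw [SS_base_y]; norm_num
  | succ Y ihy =>
    intro B
    induction B with
    | zero => intro x A; rw [SS_base_B]; norm_num
    | succ B ihB =>
      intro x A
      cases A with
      | zero => rw [SS_base_A]
      | succ A =>
        rw [SS_rec, ihB, ihy, ihy]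
        have hp1 : (Y + 1 + (A + 1)).choose (B + 1)
            = (Y + A + 1).choose B + (Y + A + 1).choose (B + 1) := by
          have : Y + 1 + (A + 1) = (Y + A + 1) + 1 := by omega
          rw [this, Nat.choose_succ_succ]
        have hp2 : (x + (B + 1)).choose (A + 1)
            = (x + B).choose A + (x + B).choose (A + 1) := by
          have : x + (B + 1) = (x + B) + 1 := by omega
          rw [this, Nat.choose_succ_succ]
        have e1 : Y + 1 + A = Y + A + 1 := by omega
        have e2 : Y + (A + 1) = Y + A + 1 := by omega
        rw [hp1, hp2, e1, e2]
        ring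


lemma ps_instance (m n r s p : ℕ) (hrm : r ≤ m) (hsn : s ≤ n) :
    Nat.choose (m + p - r) m * Nat.choose (n + p - s) n
      = ∑ k ∈ Finset.range (m + n + 1),
          chooseZ (m - r + s) ((k : ℤ) - r) * chooseZ (n - s + r) ((k : ℤ) - s)
            * Nat.choose (m + n + p - k) (m + n) := by
  by_cases hpr : r ≤ p ∧ s ≤ p
  · obtain ⟨hr, hs⟩ := hpr
    have key := SS_eq (n - s + r) (p - s) (m - r + s) (p - r)
    have e1 : (m - r + s) + (p - s) = m + p - r := by omega
    have e2 : (n - s + r) + (p - r) = n + p - s := by omega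
    rw [e1, e2] at key
    have e3 : (m + p - r).choose (p - r) = (m + p - r).choose m := by
      rw [← Nat.choose_symm (show p - r ≤ m + p - r by omega)]
      congr 1
      omega
    have e4 : (n + p - s).choose (p - s) = (n + p - s).choose n := by
      rw [← Nat.choose_symm (show p - s ≤ n + p - s by omega)]
      congr 1
      omega
    rw [e3, e4] at key
    have hxy : m - r + s + (n - s + r) = m + n := by omega
    calc Nat.choose (m + p - r) m * Nat.choose (n + p - s) n
        = SS (m - r + s) (n - s + r) (p - r) (p - s) := key.symm
      _ = ∑ j ∈ Finset.range (p + 1),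
            Nat.choose (m + n + j) j * chooseZ (m - r + s) (((p - r : ℕ) : ℤ) - j)
              * chooseZ (n - s + r) (((p - s : ℕ) : ℤ) - j) := by
          unfold SS
          rw [hxy]
          apply Finset.sum_subset (Finset.range_subset_range.mpr (by omega))
          intro j hj hj'
          rw [Finset.mem_range] at hj hj'
          have h0 : chooseZ (m - r + s) (((p - r : ℕ) : ℤ) - j) = 0 := chooseZ_neg (by omega)
          rw [h0, mul_zero, zero_mul]
      _ = ∑ k ∈ Finset.range (p + 1),
            chooseZ (m - r + s) ((k : ℤ) - r) * chooseZ (n - s + r) ((k : ℤ) - s)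
              * Nat.choose (m + n + p - k) (m + n) := by
          rw [← Finset.sum_range_reflect (fun k =>
            chooseZ (m - r + s) ((k : ℤ) - r) * chooseZ (n - s + r) ((k : ℤ) - s)
              * Nat.choose (m + n + p - k) (m + n)) (p + 1)]
          apply Finset.sum_congr rfl
          intro j hj
          rw [Finset.mem_range] at hj
          have c1 : ((p + 1 - 1 - j : ℕ) : ℤ) - r = ((p - r : ℕ) : ℤ) - j := by omega
          have c2 : ((p + 1 - 1 - j : ℕ) : ℤ) - s = ((p - s : ℕ) : ℤ) - j := by omega
          have c3 : m + n + p - (p + 1 - 1 - j) = m + n + j := by omega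
          have c4 : Nat.choose (m + n + j) (m + n) = Nat.choose (m + n + j) j := by
            rw [← Nat.choose_symm (show m + n ≤ m + n + j by omega)]
            congr 1
            omega
          rw [c1, c2, c3, c4]
          ring
      _ = ∑ k ∈ Finset.range (m + n + 1),
            chooseZ (m - r + s) ((k : ℤ) - r) * chooseZ (n - s + r) ((k : ℤ) - s)
              * Nat.choose (m + n + p - k) (m + n) := by
          rcases le_total p (m + n) with hle | hle
          · apply Finset.sum_subset (Finset.range_subset_range.mpr (by omega))
            intro j hj hj'
            rw [Finset.mem_range] at hj hj'
            have h0 : Nat.choose (m + n + p - j) (m + n) = 0 :=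
              Nat.choose_eq_zero_of_lt (by omega)
            rw [h0, mul_zero]
          · symm
            apply Finset.sum_subset (Finset.range_subset_range.mpr (by omega))
            intro j hj hj'
            rw [Finset.mem_range] at hj hj'
            have h0 : chooseZ (n - s + r) ((j : ℤ) - s) = 0 :=
              chooseZ_eq_zero_of_gt (by omega)
            rw [h0, mul_zero, zero_mul]
  · have hzero : Nat.choose (m + p - r) m * Nat.choose (n + p - s) n = 0 := by
      rcases not_and_or.mp hpr with h | h
      · have h0 : (m + p - r).choose m = 0 := Nat.choose_eq_zero_of_lt (by omega)
        rw [h0, zero_mul]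
      · have h0 : (n + p - s).choose n = 0 := Nat.choose_eq_zero_of_lt (by omega)
        rw [h0, mul_zero]
    rw [hzero]
    symm
    apply Finset.sum_eq_zero
    intro j hj
    rw [Finset.mem_range] at hj
    rcases not_and_or.mp hpr with h | h
    · push_neg at h
      by_cases hjr : j < r
      · have h0 : chooseZ (m - r + s) ((j : ℤ) - r) = 0 := chooseZ_neg (by omega)
        rw [h0, zero_mul, zero_mul]
      · have h0 : Nat.choose (m + n + p - j) (m + n) = 0 :=
          Nat.choose_eq_zero_of_lt (by omega)
        rw [h0, mul_zero]
    · push_neg at h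
      by_cases hjs : j < s
      · have h0 : chooseZ (n - s + r) ((j : ℤ) - s) = 0 := chooseZ_neg (by omega)
        rw [h0, mul_zero, zero_mul]
      · have h0 : Nat.choose (m + n + p - j) (m + n) = 0 :=
          Nat.choose_eq_zero_of_lt (by omega)
        rw [h0, mul_zero]

lemma invert (N : ℕ) (f g : ℕ → ℕ)
    (h : ∀ p, ∑ j ∈ Finset.range (N + 1), f j * Nat.choose (N + p - j) N
            = ∑ j ∈ Finset.range (N + 1), g j * Nat.choose (N + p - j) N) :
    ∀ k, k ≤ N → f k = g k := by
  intro k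
  induction k using Nat.strong_induction_on with
  | _ k ih =>
    intro hk
    have hp := h k
    have step : ∀ u : ℕ → ℕ, ∑ j ∈ Finset.range (N + 1), u j * Nat.choose (N + k - j) N
        = (∑ j ∈ Finset.range k, u j * Nat.choose (N + k - j) N) + u k := by
      intro u
      rw [← Finset.sum_subset (Finset.range_subset_range.mpr (show k + 1 ≤ N + 1 by omega)) ?_]
      · rw [Finset.sum_range_succ]
        have h1 : N + k - k = N := by omega
        rw [h1, Nat.choose_self, mul_one]
      · intro j hj hj'
        rw [Finset.mem_range] at hj hj'
        have h0 : Nat.choose (N + k - j) N = 0 := Nat.choose_eq_zero_of_lt (by omega)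
        rw [h0, mul_zero]
    rw [step f, step g] at hp
    have heqsum : ∑ j ∈ Finset.range k, f j * Nat.choose (N + k - j) N
        = ∑ j ∈ Finset.range k, g j * Nat.choose (N + k - j) N := by
      apply Finset.sum_congr rfl
      intro j hj
      rw [Finset.mem_range] at hj
      rw [ih j hj (by omega)]
    rw [heqsum] at hp
    omega

lemma sum_shuffles_choose {σ π : List ℕ} (hσ : σ.Nodup) (hπ : π.Nodup)
    (hdisj : σ.Disjoint π) (p : ℕ) :
    ∑ α ∈ shuffles σ π,
        Nat.choose (σ.length + π.length + p - des α) (σ.length + π.length)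
      = Nat.choose (σ.length + p - des σ) σ.length
          * Nat.choose (π.length + p - des π) π.length := by
  have h1 := sigma_card_eq_prod hσ hπ hdisj p
  rw [Finset.card_sigma, Finset.card_product, card_compatF σ p, card_compatF π p] at h1
  rw [des_eq_countAdj σ, des_eq_countAdj π, ← h1]
  apply Finset.sum_congr rfl
  intro α hα
  have hsh := (mem_shuffles (hσ.append hπ hdisj)).mp hα
  rw [card_compatF α p, hsh.2.2.2, ← des_eq_countAdj α]

lemma sum_over_des {σ π : List ℕ} (hσπ : (σ ++ π).Nodup) (p : ℕ) :
    ∑ α ∈ shuffles σ π,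
        Nat.choose (σ.length + π.length + p - des α) (σ.length + π.length)
      = ∑ k ∈ Finset.range (σ.length + π.length + 1),
          ((shuffles σ π).filter (fun α => des α = k)).card
            * Nat.choose (σ.length + π.length + p - k) (σ.length + π.length) := by
  classical
  rw [← Finset.sum_fiberwise_of_maps_to (g := des)
    (t := Finset.range (σ.length + π.length + 1)) ?_
    (fun α => Nat.choose (σ.length + π.length + p - des α) (σ.length + π.length))]
  · apply Finset.sum_congr rfl
    intro k hk
    rw [Finset.sum_congr rfl (fun α hα => by rw [(Finset.mem_filter.mp hα).2]),
      Finset.sum_const, smul_eq_mul]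
  · intro α hα
    have hsh := (mem_shuffles hσπ).mp hα
    rw [Finset.mem_range]
    have := des_le α
    rw [hsh.2.2.2] at this
    omega

end Stanley

/-- Stanley's Shuffle Theorem at `q = 1`: counting shuffles with `k` descents. -/
theorem stanley_q1 (m n r s k : ℕ) (σ π : List ℕ) (hσ : σ.Nodup) (hπ : π.Nodup)
    (hdisj : σ.Disjoint π) (hm : σ.length = m) (hn : π.length = n)
    (hr : des σ = r) (hs : des π = s) :
    {α : List ℕ | IsShuffle σ π α ∧ des α = k}.ncard
      = chooseZ (m - r + s) ((k : ℤ) - r) * chooseZ (n - s + r) ((k : ℤ) - s) := by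
  classical
  subst hm hn hr hs
  have hσπ : (σ ++ π).Nodup := hσ.append hπ hdisj
  have hset : {α | IsShuffle σ π α ∧ des α = k}
      = ↑((Stanley.shuffles σ π).filter (fun α => des α = k)) := by
    ext α
    constructor
    · rintro ⟨h1, h2⟩
      simp only [Finset.coe_filter, Set.mem_setOf_eq]
      exact ⟨(Stanley.mem_shuffles hσπ).mpr h1, h2⟩
    · intro h
      simp only [Finset.coe_filter, Set.mem_setOf_eq] at h
      exact ⟨(Stanley.mem_shuffles hσπ).mp h.1, h.2⟩
  rw [hset, Set.ncard_coe_finset]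
  have hrm : des σ ≤ σ.length := le_trans (Stanley.des_le σ) (Nat.sub_le _ _)
  have hsn : des π ≤ π.length := le_trans (Stanley.des_le π) (Nat.sub_le _ _)
  by_cases hkN : k ≤ σ.length + π.length
  · apply Stanley.invert (σ.length + π.length)
      (fun j => ((Stanley.shuffles σ π).filter (fun α => des α = j)).card)
      (fun j => chooseZ (σ.length - des σ + des π) ((j : ℤ) - des σ)
        * chooseZ (π.length - des π + des σ) ((j : ℤ) - des π)) ?_ k hkN
    intro p
    calc ∑ j ∈ Finset.range (σ.length + π.length + 1),
          ((Stanley.shuffles σ π).filter (fun α => des α = j)).card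
            * Nat.choose (σ.length + π.length + p - j) (σ.length + π.length)
        = ∑ α ∈ Stanley.shuffles σ π,
            Nat.choose (σ.length + π.length + p - des α) (σ.length + π.length) :=
          (Stanley.sum_over_des hσπ p).symm
      _ = Nat.choose (σ.length + p - des σ) σ.length
            * Nat.choose (π.length + p - des π) π.length :=
          Stanley.sum_shuffles_choose hσ hπ hdisj p
      _ = ∑ j ∈ Finset.range (σ.length + π.length + 1),
            chooseZ (σ.length - des σ + des π) ((j : ℤ) - des σ)
              * chooseZ (π.length - des π + des σ) ((j : ℤ) - des π)
              * Nat.choose (σ.length + π.length + p - j) (σ.length + π.length) :=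
          Stanley.ps_instance σ.length π.length (des σ) (des π) p hrm hsn
  · have hL : ((Stanley.shuffles σ π).filter (fun α => des α = k)).card = 0 := by
      rw [Finset.card_eq_zero, Finset.filter_eq_empty_iff]
      intro α hα
      have hsh := (Stanley.mem_shuffles hσπ).mp hα
      have hd := Stanley.des_le α
      rw [hsh.2.2.2] at hd
      omega
    rw [hL]
    have h2 : chooseZ (π.length - des π + des σ) ((k : ℤ) - des π) = 0 :=
      Stanley.chooseZ_eq_zero_of_gt (by omega)
    rw [h2, mul_zero]
end

section
/- Let [π] be a cyclic permutation of length n. Then Σ over all letters i of [π] of x^{des(S_i([π]))} = (n − s)·x^s + s·x^{s−1}, where s = cdes([π]) and S_i([π]) is the rotation of [π] starting with letter i. -/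
open Polynomial

private lemma modcases (a n : ℕ) (hn : 0 < n) (h : a < 2 * n) :
    (a % n = a ∨ a % n + n = a) ∧ a % n < n := by
  refine ⟨?_, Nat.mod_lt _ hn⟩
  rcases Nat.lt_or_ge a n with h' | h'
  · exact Or.inl (Nat.mod_eq_of_lt h')
  · right
    rw [Nat.mod_eq_sub_mod h', Nat.mod_eq_of_lt (by omega)]
    omega

private lemma getD_rotate (l : List ℕ) (j k : ℕ) (hk : k < l.length) :
    (l.rotate j).getD k 0 = l.getD ((k + j) % l.length) 0 := by
  rw [List.getD_eq_getElem _ _ (by simpa using hk),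
      List.getD_eq_getElem _ _ (Nat.mod_lt _ (by omega)),
      List.getElem_rotate]

private noncomputable def cF (l : List ℕ) : Finset ℕ :=
  (Finset.range l.length).filter (fun k => l.getD ((k + 1) % l.length) 0 < l.getD k 0)

private lemma cdes_eq_cF (l : List ℕ) (h0 : 0 < l.length) : cdes l = (cF l).card := by
  unfold cdes cdesSet cF
  apply Finset.card_nbij' (i := fun p => p - 1) (j := fun k => k + 1)
  · intro p hp
    simp only [Finset.mem_coe, Finset.mem_filter, Finset.mem_Icc, Finset.mem_range] at hp ⊢
    obtain ⟨⟨h1, h2⟩, h3⟩ := hp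
    refine ⟨by omega, ?_⟩
    rwa [Nat.sub_add_cancel h1]
  · intro k hk
    simp only [Finset.mem_coe, Finset.mem_filter, Finset.mem_Icc, Finset.mem_range] at hk ⊢
    exact ⟨⟨by omega, by omega⟩, by simpa using hk.2⟩
  · intro p hp
    simp only [Finset.mem_coe, Finset.mem_filter, Finset.mem_Icc] at hp
    dsimp only
    omega
  · intro k _
    dsimp only
    omega

private lemma des_rotate (l : List ℕ) (j : ℕ) (hj : j < l.length) :
    des (l.rotate j) = ((cF l).erase ((j + l.length - 1) % l.length)).card := by
  have hn : 0 < l.length := by omega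
  obtain ⟨hm1, hm2⟩ := modcases (j + l.length - 1) l.length hn (by omega)
  unfold des desSet cF
  apply Finset.card_nbij' (i := fun i => (i - 1 + j) % l.length)
      (j := fun k => if k < j then k + 1 + l.length - j else k + 1 - j)
  · intro i hi
    simp only [Finset.mem_coe, Finset.mem_filter, Finset.mem_Icc, List.length_rotate] at hi
    obtain ⟨⟨h1, h2⟩, h3⟩ := hi
    obtain ⟨hk1, hk2⟩ := modcases (i - 1 + j) l.length hn (by omega)
    rw [getD_rotate l j i (by omega), getD_rotate l j (i - 1) (by omega)] at h3
    simp only [Finset.mem_coe, Finset.mem_erase, Finset.mem_filter, Finset.mem_range]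
    refine ⟨by omega, hk2, ?_⟩
    rw [Nat.mod_add_mod]
    have e : i - 1 + j + 1 = i + j := by omega
    rwa [e]
  · intro k hk
    simp only [Finset.mem_coe, Finset.mem_erase, Finset.mem_filter, Finset.mem_range] at hk
    obtain ⟨hne, hk1, hk2⟩ := hk
    simp only [Finset.mem_coe, Finset.mem_filter, Finset.mem_Icc, List.length_rotate]
    rcases Nat.lt_or_ge k j with h | h
    · rw [if_pos h]
      refine ⟨⟨by omega, by omega⟩, ?_⟩
      rw [getD_rotate l j _ (by omega), getD_rotate l j _ (by omega)]
      have e1 : k + 1 + l.length - j - 1 + j = k + l.length := by omega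
      have e2 : k + 1 + l.length - j + j = k + 1 + l.length := by omega
      rw [e1, e2, Nat.add_mod_right, Nat.add_mod_right, Nat.mod_eq_of_lt hk1]
      exact hk2
    · rw [if_neg (by omega)]
      refine ⟨⟨by omega, by omega⟩, ?_⟩
      rw [getD_rotate l j _ (by omega), getD_rotate l j _ (by omega)]
      have e1 : k + 1 - j - 1 + j = k := by omega
      have e2 : k + 1 - j + j = k + 1 := by omega
      rw [e1, e2, Nat.mod_eq_of_lt hk1]
      exact hk2
  · intro i hi
    simp only [Finset.mem_coe, Finset.mem_filter, Finset.mem_Icc, List.length_rotate] at hi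
    dsimp only
    obtain ⟨⟨h1, h2⟩, _⟩ := hi
    obtain ⟨hk1, hk2⟩ := modcases (i - 1 + j) l.length hn (by omega)
    split_ifs <;> omega
  · intro k hk
    simp only [Finset.mem_coe, Finset.mem_erase, Finset.mem_filter, Finset.mem_range] at hk
    dsimp only
    obtain ⟨hne, hk1, _⟩ := hk
    rcases Nat.lt_or_ge k j with h | h
    · rw [if_pos h]
      have e1 : k + 1 + l.length - j - 1 + j = k + l.length := by omega
      rw [e1, Nat.add_mod_right, Nat.mod_eq_of_lt hk1]
    · rw [if_neg (by omega)]
      have e1 : k + 1 - j - 1 + j = k := by omega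
      rw [e1, Nat.mod_eq_of_lt hk1]


/-- The generating function of descent numbers over all rotations of a cyclic
permutation: `∑_i x^{des(S_i([π]))} = (n-s) x^s + s x^{s-1}`. -/
theorem sum_des_rotations (n s : ℕ) (l : List ℕ) (hl : l.Nodup) (h0 : l ≠ [])
    (hn : l.length = n) (hs : cdes l = s) :
    ∑ i ∈ l.toFinset, (X : Polynomial ℤ) ^ des (startAt l i)
      = ((n - s : ℕ) : Polynomial ℤ) * X ^ s + (s : Polynomial ℤ) * X ^ (s - 1) := by
  subst hn hs
  have hn : 0 < l.length := List.length_pos_iff.mpr h0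
  -- reindex over rotations
  have step1 : ∑ i ∈ l.toFinset, (X : Polynomial ℤ) ^ des (startAt l i)
      = ∑ j ∈ Finset.range l.length, (X : Polynomial ℤ) ^ des (l.rotate j) := by
    apply Finset.sum_nbij' (i := fun i => l.idxOf i) (j := fun k => l.getD k 0)
    · intro a ha
      simp only [Finset.mem_range]
      exact List.idxOf_lt_length_iff.2 (List.mem_toFinset.1 ha)
    · intro k hk
      simp only [Finset.mem_range] at hk
      rw [List.getD_eq_getElem _ _ hk]
      exact List.mem_toFinset.2 (List.getElem_mem _)
    · intro a ha
      have h := List.idxOf_lt_length_iff.2 (List.mem_toFinset.1 ha)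
      rw [List.getD_eq_getElem _ _ h, List.getElem_idxOf]
    · intro k hk
      simp only [Finset.mem_range] at hk
      rw [List.getD_eq_getElem _ _ hk, List.Nodup.idxOf_getElem hl]
    · intro a _
      rfl
  rw [step1]
  set F := cF l with hF
  have hcard : cdes l = F.card := cdes_eq_cF l hn
  set s := cdes l with hs
  -- split according to whether the wrap position is a cyclic descent
  rw [← Finset.sum_filter_add_sum_filter_not (Finset.range l.length)
      (fun j => (j + l.length - 1) % l.length ∈ F)]
  have hA : ((Finset.range l.length).filter
      (fun j => (j + l.length - 1) % l.length ∈ F)).card = s := by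
    rw [hcard]
    apply Finset.card_nbij' (i := fun j => (j + l.length - 1) % l.length)
        (j := fun k => (k + 1) % l.length)
    · intro j hj
      exact (Finset.mem_filter.1 hj).2
    · intro k hk
      have hk1 : k < l.length := by
        have := Finset.mem_filter.1 (hF ▸ hk)
        simpa using Finset.mem_range.1 this.1
      obtain ⟨ha1, ha2⟩ := modcases (k + 1) l.length hn (by omega)
      obtain ⟨hb1, hb2⟩ := modcases ((k + 1) % l.length + l.length - 1) l.length hn (by omega)
      simp only [Finset.mem_coe, Finset.mem_filter, Finset.mem_range]
      have hbk : ((k + 1) % l.length + l.length - 1) % l.length = k := by omega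
      rw [hbk]
      exact ⟨ha2, hk⟩
    · intro j hj
      simp only [Finset.mem_coe, Finset.mem_filter, Finset.mem_range] at hj
      dsimp only
      rw [Nat.mod_add_mod]
      have e : j + l.length - 1 + 1 = j + l.length := by omega
      rw [e, Nat.add_mod_right, Nat.mod_eq_of_lt hj.1]
    · intro k hk
      have hk1 : k < l.length := by
        have := Finset.mem_filter.1 (hF ▸ hk)
        simpa using Finset.mem_range.1 this.1
      obtain ⟨ha1, ha2⟩ := modcases (k + 1) l.length hn (by omega)
      obtain ⟨hb1, hb2⟩ := modcases ((k + 1) % l.length + l.length - 1) l.length hn (by omega)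
      dsimp only
      omega
  have hA' : ((Finset.range l.length).filter
      (fun j => ¬ ((j + l.length - 1) % l.length ∈ F))).card = l.length - s := by
    have := Finset.card_filter_add_card_filter_not (s := Finset.range l.length)
      (p := fun j => (j + l.length - 1) % l.length ∈ F)
    rw [Finset.card_range] at this
    omega
  have sum1 : ∑ j ∈ (Finset.range l.length).filter
      (fun j => (j + l.length - 1) % l.length ∈ F), (X : Polynomial ℤ) ^ des (l.rotate j)
      = s • (X : Polynomial ℤ) ^ (s - 1) := by
    have hcg : ∀ j ∈ (Finset.range l.length).filter
        (fun j => (j + l.length - 1) % l.length ∈ F),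
        (X : Polynomial ℤ) ^ des (l.rotate j) = (X : Polynomial ℤ) ^ (s - 1) := by
      intro j hj
      simp only [Finset.mem_filter, Finset.mem_range] at hj
      rw [des_rotate l j hj.1, Finset.card_erase_of_mem hj.2, ← hcard]
    rw [Finset.sum_congr rfl hcg, Finset.sum_const, hA]
  have sum2 : ∑ j ∈ (Finset.range l.length).filter
      (fun j => ¬ ((j + l.length - 1) % l.length ∈ F)), (X : Polynomial ℤ) ^ des (l.rotate j)
      = (l.length - s) • (X : Polynomial ℤ) ^ s := by
    have hcg : ∀ j ∈ (Finset.range l.length).filter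
        (fun j => ¬ ((j + l.length - 1) % l.length ∈ F)),
        (X : Polynomial ℤ) ^ des (l.rotate j) = (X : Polynomial ℤ) ^ s := by
      intro j hj
      simp only [Finset.mem_filter, Finset.mem_range] at hj
      rw [des_rotate l j hj.1, Finset.erase_eq_of_notMem hj.2, ← hcard]
    rw [Finset.sum_congr rfl hcg, Finset.sum_const, hA']
  rw [sum1, sum2, nsmul_eq_mul, nsmul_eq_mul, add_comm]
end
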